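/- arXiv:2102.09879 — 5 statements merged into one kernel-verified Lean document; each statement's English description precedes it below -/
import Mathlib

section
/- Let G = (V,E) be a finite undirected simple graph with N vertices, injective positive edge weights, and (unique) minimum spanning forest T. Let V_n ⊆ V be any subset of vertices, let G_n = (V_n, E_n) be the subgraph of G induced by V_n, and let T_n be the (unique) minimum spanning forest of G_n. Then T ∩ (E_n \ T_n) = ∅; equivalently, every edge of the induced subgraph that is not in the sample MSF T_n is also not in the population MSF T, so that E_n \ T_n = E_n \ (T ∪ T_n). -/
/-- `T` is a spanning forest of `G`: an acyclic set `T` of edges of `G` such that any two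
vertices lying in the same connected component of `G` are joined by a path using only
edges of `T`. -/
def IsSpanningForest {V : Type*} (G : SimpleGraph V) (T : Finset (Sym2 V)) : Prop :=
  (T : Set (Sym2 V)) ⊆ G.edgeSet ∧
    (SimpleGraph.fromEdgeSet (T : Set (Sym2 V))).IsAcyclic ∧
    ∀ u v : V, G.Reachable u v → (SimpleGraph.fromEdgeSet (T : Set (Sym2 V))).Reachable u v

/-- `T` is a minimum spanning forest of `G` with respect to the weights `w`. -/
def IsMSF {V : Type*} (G : SimpleGraph V) (w : Sym2 V → ℝ) (T : Finset (Sym2 V)) : Prop :=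
  IsSpanningForest G T ∧
    ∀ T' : Finset (Sym2 V), IsSpanningForest G T' → ∑ e ∈ T, w e ≤ ∑ e ∈ T', w e

open SimpleGraph Finset

namespace MSFAux

variable {V : Type*} [DecidableEq V]

lemma fromEdgeSet_erase (S : Finset (Sym2 V)) (e : Sym2 V) :
    SimpleGraph.fromEdgeSet (↑(S.erase e) : Set (Sym2 V)) =
      SimpleGraph.fromEdgeSet (↑S : Set (Sym2 V)) \ SimpleGraph.fromEdgeSet {e} := by
  ext a b
  simp only [fromEdgeSet_adj, Finset.coe_erase, Set.mem_diff, Finset.mem_coe, sdiff_adj,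
    Set.mem_singleton_iff]
  tauto

lemma isAcyclic_mono {G G' : SimpleGraph V} (h : G ≤ G') (h' : G'.IsAcyclic) : G.IsAcyclic :=
  fun _ p hp => h' (p.mapLe h) (hp.mapLe h)

lemma reachable_of_adj_reachable {G H : SimpleGraph V}
    (hadj : ∀ a b : V, G.Adj a b → H.Reachable a b) {x y : V} (h : G.Reachable x y) :
    H.Reachable x y := by
  obtain ⟨p⟩ := h
  induction p with
  | nil => exact Reachable.refl _
  | cons h' p ih => exact (hadj _ _ h').trans ih

lemma reachable_erase_of_not_mem_edges {S : Finset (Sym2 V)} {f : Sym2 V} {x y : V}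
    (p : (SimpleGraph.fromEdgeSet (↑S : Set (Sym2 V))).Walk x y) (hf : f ∉ p.edges) :
    (SimpleGraph.fromEdgeSet (↑(S.erase f) : Set (Sym2 V))).Reachable x y := by
  refine ⟨p.transfer _ ?_⟩
  intro e he
  have h1 := p.edges_subset_edgeSet he
  rw [edgeSet_fromEdgeSet] at h1 ⊢
  refine ⟨?_, h1.2⟩
  exact Finset.mem_coe.2 (Finset.mem_erase.2 ⟨fun h => hf (h ▸ he), Finset.mem_coe.1 h1.1⟩)

lemma not_reachable_erase_of_acyclic {S : Finset (Sym2 V)}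
    (hac : (SimpleGraph.fromEdgeSet (↑S : Set (Sym2 V))).IsAcyclic) {u v : V} (huv : u ≠ v)
    (he : s(u, v) ∈ S) :
    ¬ (SimpleGraph.fromEdgeSet (↑(S.erase s(u, v)) : Set (Sym2 V))).Reachable u v := by
  have hadj : (SimpleGraph.fromEdgeSet (↑S : Set (Sym2 V))).Adj u v := by
    rw [fromEdgeSet_adj]; exact ⟨Finset.mem_coe.2 he, huv⟩
  have hb := (isAcyclic_iff_forall_edge_isBridge.mp hac)
    (e := s(u, v)) (by rw [mem_edgeSet]; exact hadj)
  rw [isBridge_iff] at hb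
  rw [fromEdgeSet_erase]
  exact hb

lemma isAcyclic_insert {S : Finset (Sym2 V)}
    (hac : (SimpleGraph.fromEdgeSet (↑S : Set (Sym2 V))).IsAcyclic) {a b : V}
    (hnr : ¬ (SimpleGraph.fromEdgeSet (↑S : Set (Sym2 V))).Reachable a b) :
    (SimpleGraph.fromEdgeSet (↑(insert s(a, b) S) : Set (Sym2 V))).IsAcyclic := by
  intro x c hc
  by_cases hm : s(a, b) ∈ c.edges
  · have hkey := (adj_and_reachable_delete_edges_iff_exists_cycle
      (G := SimpleGraph.fromEdgeSet (↑(insert s(a, b) S) : Set (Sym2 V))) (v := a)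
      (w := b)).mpr ⟨x, c, hc, hm⟩
    apply hnr
    refine hkey.2.mono ?_
    intro p q hpq
    simp only [sdiff_adj, fromEdgeSet_adj, Finset.mem_coe, Finset.mem_insert,
      Set.mem_singleton_iff] at hpq ⊢
    obtain ⟨⟨h1, h2⟩, h3⟩ := hpq
    rcases Finset.mem_insert.mp (show s(p, q) ∈ insert s(a, b) S from h1) with h1 | h1
    · exact absurd ⟨h1, h2⟩ h3
    · exact ⟨h1, h2⟩
  · have hsub : ∀ e ∈ c.edges,
        e ∈ (SimpleGraph.fromEdgeSet (↑S : Set (Sym2 V))).edgeSet := by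
      intro e hec
      have h1 := c.edges_subset_edgeSet hec
      rw [edgeSet_fromEdgeSet] at h1 ⊢
      refine ⟨?_, h1.2⟩
      rcases Finset.mem_insert.mp (Finset.mem_coe.1 h1.1) with h | h
      · exact absurd (h ▸ hec) hm
      · exact Finset.mem_coe.2 h
    exact hac (c.transfer _ hsub) (hc.transfer hsub)

lemma reachable_erase_split_aux {S : Finset (Sym2 V)} {u v : V} :
    ∀ {x y : V}, (SimpleGraph.fromEdgeSet (↑S : Set (Sym2 V))).Walk x y →
      (SimpleGraph.fromEdgeSet (↑(S.erase s(u, v)) : Set (Sym2 V))).Reachable x y ∨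
      (((SimpleGraph.fromEdgeSet (↑(S.erase s(u, v)) : Set (Sym2 V))).Reachable x u ∨
        (SimpleGraph.fromEdgeSet (↑(S.erase s(u, v)) : Set (Sym2 V))).Reachable x v) ∧
       ((SimpleGraph.fromEdgeSet (↑(S.erase s(u, v)) : Set (Sym2 V))).Reachable y u ∨
        (SimpleGraph.fromEdgeSet (↑(S.erase s(u, v)) : Set (Sym2 V))).Reachable y v)) := by
  intro x y p
  induction p with
  | nil => exact Or.inl (Reachable.refl _)
  | @cons x z y h q ih =>
    by_cases hxz : s(x, z) = s(u, v)
    · have hx : (SimpleGraph.fromEdgeSet (↑(S.erase s(u, v)) : Set (Sym2 V))).Reachable x u ∨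
          (SimpleGraph.fromEdgeSet (↑(S.erase s(u, v)) : Set (Sym2 V))).Reachable x v := by
        rcases Sym2.eq_iff.mp hxz with ⟨rfl, rfl⟩ | ⟨rfl, rfl⟩
        · exact Or.inl (Reachable.refl _)
        · exact Or.inr (Reachable.refl _)
      have hz : (SimpleGraph.fromEdgeSet (↑(S.erase s(u, v)) : Set (Sym2 V))).Reachable z u ∨
          (SimpleGraph.fromEdgeSet (↑(S.erase s(u, v)) : Set (Sym2 V))).Reachable z v := by
        rcases Sym2.eq_iff.mp hxz with ⟨rfl, rfl⟩ | ⟨rfl, rfl⟩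
        · exact Or.inr (Reachable.refl _)
        · exact Or.inl (Reachable.refl _)
      rcases ih with h' | h'
      · refine Or.inr ⟨hx, ?_⟩
        rcases hz with hz | hz
        · exact Or.inl (h'.symm.trans hz)
        · exact Or.inr (h'.symm.trans hz)
      · exact Or.inr ⟨hx, h'.2⟩
    · have hadj : (SimpleGraph.fromEdgeSet (↑(S.erase s(u, v)) : Set (Sym2 V))).Adj x z := by
        rw [fromEdgeSet_adj] at h ⊢
        exact ⟨Finset.mem_coe.2 (Finset.mem_erase.2 ⟨hxz, Finset.mem_coe.1 h.1⟩), h.2⟩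
      rcases ih with h' | h'
      · exact Or.inl (hadj.reachable.trans h')
      · refine Or.inr ⟨?_, h'.2⟩
        rcases h'.1 with t | t
        · exact Or.inl (hadj.reachable.trans t)
        · exact Or.inr (hadj.reachable.trans t)

lemma reachable_erase_split {S : Finset (Sym2 V)} {u v x : V}
    (p : (SimpleGraph.fromEdgeSet (↑S : Set (Sym2 V))).Walk x u) :
    (SimpleGraph.fromEdgeSet (↑(S.erase s(u, v)) : Set (Sym2 V))).Reachable x u ∨
      (SimpleGraph.fromEdgeSet (↑(S.erase s(u, v)) : Set (Sym2 V))).Reachable x v := by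
  rcases reachable_erase_split_aux (u := u) (v := v) p with h | h
  · exact Or.inl h
  · exact h.1

lemma exists_crossing_edge {H : SimpleGraph V} (Q : V → Prop) :
    ∀ {u v : V} (p : H.Walk u v), Q u → ¬ Q v →
      ∃ a b : V, s(a, b) ∈ p.edges ∧ H.Adj a b ∧ Q a ∧ ¬ Q b := by
  intro u v p
  induction p with
  | nil => intro h h'; exact absurd h h'
  | @cons u y v h q ih =>
    intro hu hv
    by_cases hy : Q y
    · obtain ⟨a, b, hm, hab, ha, hb⟩ := ih hy hv
      exact ⟨a, b, by rw [Walk.edges_cons]; exact List.mem_cons_of_mem _ hm, hab, ha, hb⟩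
    · exact ⟨u, y, by rw [Walk.edges_cons]; exact List.mem_cons_self, h, hu, hy⟩

lemma not_reachable_erase_of_mem_path {S : Finset (Sym2 V)}
    (hac : (SimpleGraph.fromEdgeSet (↑S : Set (Sym2 V))).IsAcyclic) {f : Sym2 V} :
    ∀ {u v : V} (p : (SimpleGraph.fromEdgeSet (↑S : Set (Sym2 V))).Walk u v), p.IsPath →
      f ∈ p.edges → ¬ (SimpleGraph.fromEdgeSet (↑(S.erase f) : Set (Sym2 V))).Reachable u v := by
  intro u v p
  induction p with
  | nil => simp
  | @cons u x v h q ih =>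
    intro hp hf hr
    rw [Walk.edges_cons, List.mem_cons] at hf
    have hq_edge : s(u, x) ∉ q.edges := by
      intro hmem
      exact (Walk.cons_isPath_iff h q).mp hp |>.2 (q.fst_mem_support_of_mem_edges hmem)
    rcases hf with rfl | hf
    · have huxS : s(u, x) ∈ S := by
        rw [fromEdgeSet_adj] at h
        exact Finset.mem_coe.1 h.1
      have h1 := not_reachable_erase_of_acyclic hac h.ne huxS
      have h2 := reachable_erase_of_not_mem_edges q hq_edge
      exact h1 (hr.trans h2.symm)
    · have hne : s(u, x) ≠ f := fun hh => hq_edge (hh ▸ hf)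
      have hadj : (SimpleGraph.fromEdgeSet (↑(S.erase f) : Set (Sym2 V))).Adj u x := by
        rw [fromEdgeSet_adj] at h ⊢

        exact ⟨Finset.mem_coe.2 (Finset.mem_erase.2 ⟨hne, Finset.mem_coe.1 h.1⟩), h.2⟩
      exact ih hp.of_cons hf (hadj.symm.reachable.trans hr)


lemma msf_path_light {G : SimpleGraph V} {w : Sym2 V → ℝ}
    (hinj : Set.InjOn w G.edgeSet)
    {T : Finset (Sym2 V)} (hT : IsMSF G w T)
    {u v : V} (huv : G.Adj u v) (he : s(u, v) ∉ T)
    (p : (SimpleGraph.fromEdgeSet (↑T : Set (Sym2 V))).Walk u v) (hp : p.IsPath)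
    {f : Sym2 V} (hf : f ∈ p.edges) : w f < w s(u, v) := by
  have hfT : f ∈ T := by
    have h1 := p.edges_subset_edgeSet hf
    rw [edgeSet_fromEdgeSet] at h1
    exact Finset.mem_coe.1 h1.1
  have hfG : f ∈ G.edgeSet := hT.1.1 (Finset.mem_coe.2 hfT)
  have heG : s(u, v) ∈ G.edgeSet := by rw [mem_edgeSet]; exact huv
  have hne : f ≠ s(u, v) := fun hh => he (hh ▸ hfT)
  rcases lt_trichotomy (w f) (w s(u, v)) with hlt | heq | hgt
  · exact hlt
  · exact absurd (hinj hfG heG heq) hne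
  · -- swap: T' = insert s(u,v) (T.erase f) is a cheaper spanning forest
    exfalso
    set T' : Finset (Sym2 V) := insert s(u, v) (T.erase f) with hT'
    have hTfacyc : (SimpleGraph.fromEdgeSet (↑(T.erase f) : Set (Sym2 V))).IsAcyclic :=
      isAcyclic_mono (fromEdgeSet_mono (Finset.coe_subset.2 (Finset.erase_subset _ _)))
        hT.1.2.1
    have hnr : ¬ (SimpleGraph.fromEdgeSet (↑(T.erase f) : Set (Sym2 V))).Reachable u v :=
      not_reachable_erase_of_mem_path hT.1.2.1 p hp hf
    have hle : SimpleGraph.fromEdgeSet (↑(T.erase f) : Set (Sym2 V)) ≤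
        SimpleGraph.fromEdgeSet (↑T' : Set (Sym2 V)) := by
      apply fromEdgeSet_mono
      intro g hg
      exact Finset.mem_coe.2 (Finset.mem_insert_of_mem (Finset.mem_coe.1 hg))
    have hadjuv : (SimpleGraph.fromEdgeSet (↑T' : Set (Sym2 V))).Adj u v := by
      rw [fromEdgeSet_adj]
      exact ⟨Finset.mem_coe.2 (Finset.mem_insert_self _ _), huv.ne⟩
    have hSF : IsSpanningForest G T' := by
      refine ⟨?_, ?_, ?_⟩
      · intro g hg
        rcases Finset.mem_insert.mp (Finset.mem_coe.1 hg) with rfl | hg'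
        · exact heG
        · exact hT.1.1 (Finset.mem_coe.2 (Finset.mem_of_mem_erase hg'))
      · exact isAcyclic_insert hTfacyc hnr
      · intro x y hxy
        refine reachable_of_adj_reachable ?_ (hT.1.2.2 x y hxy)
        intro a b hab
        rw [fromEdgeSet_adj] at hab
        by_cases habf : s(a, b) = f
        · -- need Reachable a b in T'
          have hfp : s(a, b) ∈ p.edges := habf ▸ hf
          have hsupa : a ∈ p.support := p.fst_mem_support_of_mem_edges hfp
          have hsupb : b ∈ p.support := p.snd_mem_support_of_mem_edges hfp
          have hua := reachable_erase_split (u := a) (v := b) (p.takeUntil a hsupa)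
          have hvb := reachable_erase_split (u := b) (v := a)
            (p.reverse.takeUntil b (by rw [Walk.support_reverse, List.mem_reverse]; exact hsupb))
          rw [Sym2.eq_swap, habf] at hvb
          rw [habf] at hua
          rcases hua with hua | hua <;> rcases hvb with hvb | hvb
          · -- u ~ a, v ~ b
            exact ((hua.symm.mono hle).trans hadjuv.reachable).trans (hvb.mono hle)
          · -- u ~ a, v ~ a : u ~ v contradiction
            exact absurd (hua.trans hvb.symm) hnr
          · -- u ~ b, v ~ b : u ~ v contradiction
            exact absurd (hua.trans hvb.symm) hnr
          · -- u ~ b, v ~ a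
            exact ((hvb.symm.mono hle).trans hadjuv.symm.reachable).trans (hua.mono hle)
        · have : (SimpleGraph.fromEdgeSet (↑(T.erase f) : Set (Sym2 V))).Adj a b := by
            rw [fromEdgeSet_adj]
            exact ⟨Finset.mem_coe.2 (Finset.mem_erase.2 ⟨habf, Finset.mem_coe.1 hab.1⟩), hab.2⟩
          exact (hle this).reachable
    have hsum : ∑ e ∈ T', w e = w s(u, v) + (∑ e ∈ T, w e - w f) := by
      rw [hT', Finset.sum_insert (fun hc => he (Finset.mem_of_mem_erase hc)),
        Finset.sum_erase_eq_sub hfT]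
    have := hT.2 T' hSF
    rw [hsum] at this
    linarith

end MSFAux

/-- If `T` is the MSF of a finite graph `G` with distinct positive edge weights,
`Vₙ` is any subset of the vertices, `Eₙ` is the edge set of the subgraph of `G` induced
by `Vₙ`, and `Tₙ` is the MSF of that induced subgraph, then no edge of `Eₙ \ Tₙ` lies in
`T`; equivalently `Eₙ \ Tₙ = Eₙ \ (T ∪ Tₙ)`. -/
theorem mst_inter_sample_nonMst_empty {V : Type*} [Fintype V] [DecidableEq V]
    (G : SimpleGraph V) (w : Sym2 V → ℝ)
    (hpos : ∀ e ∈ G.edgeSet, 0 < w e)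
    (hinj : Set.InjOn w G.edgeSet)
    (T : Finset (Sym2 V)) (hT : IsMSF G w T)
    (Vn : Finset V) (En : Finset (Sym2 V))
    (hEn : (En : Set (Sym2 V)) = {e ∈ G.edgeSet | ∀ v ∈ e, v ∈ Vn})
    (Tn : Finset (Sym2 V))
    (hTn : IsMSF (SimpleGraph.fromEdgeSet (En : Set (Sym2 V))) w Tn) :
    T ∩ (En \ Tn) = ∅ ∧ En \ Tn = En \ (T ∪ Tn) := by
  classical
  have hEnG : ∀ e ∈ En, e ∈ G.edgeSet := by
    intro e he
    have : (e : Sym2 V) ∈ (↑En : Set (Sym2 V)) := Finset.mem_coe.2 he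
    rw [hEn] at this
    exact this.1
  have hTnG : (↑Tn : Set (Sym2 V)) ⊆ G.edgeSet := by
    intro e he
    have h1 := hTn.1.1 he
    rw [edgeSet_fromEdgeSet] at h1
    exact hEnG e (Finset.mem_coe.1 h1.1)
  have hTnle : SimpleGraph.fromEdgeSet (↑Tn : Set (Sym2 V)) ≤ G := by
    have := SimpleGraph.fromEdgeSet_mono hTnG
    rwa [SimpleGraph.fromEdgeSet_edgeSet] at this
  have key' : ∀ u v : V, s(u, v) ∈ En → s(u, v) ∉ Tn → s(u, v) ∉ T := by
    intro u v heE heTn heT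
    have heG : s(u, v) ∈ G.edgeSet := hEnG _ heE
    have hG : G.Adj u v := (G.mem_edgeSet).mp heG
    have huv : u ≠ v := hG.ne
    have hGn : (SimpleGraph.fromEdgeSet (↑En : Set (Sym2 V))).Adj u v := by
      rw [SimpleGraph.fromEdgeSet_adj]
      exact ⟨Finset.mem_coe.2 heE, huv⟩
    obtain ⟨p0⟩ := hTn.1.2.2 u v hGn.reachable
    set p := p0.bypass with hpdef
    have hp : p.IsPath := p0.bypass_isPath
    have hinj' : Set.InjOn w (SimpleGraph.fromEdgeSet (↑En : Set (Sym2 V))).edgeSet := by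
      refine hinj.mono ?_
      rw [SimpleGraph.edgeSet_fromEdgeSet]
      intro e he
      exact hEnG e (Finset.mem_coe.1 he.1)
    have hlight : ∀ f ∈ p.edges, w f < w s(u, v) := fun f hf =>
      MSFAux.msf_path_light hinj' hTn hGn heTn p hp hf
    -- e = s(u,v) is a bridge of fromEdgeSet T
    have hnr : ¬ (SimpleGraph.fromEdgeSet
        (↑(T.erase s(u, v)) : Set (Sym2 V))).Reachable u v :=
      MSFAux.not_reachable_erase_of_acyclic hT.1.2.1 huv heT
    -- crossing edge of the path p w.r.t. the cut of T - e
    obtain ⟨a, b, habm, habadj, hQa, hQb⟩ := MSFAux.exists_crossing_edge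
      (fun x => (SimpleGraph.fromEdgeSet
        (↑(T.erase s(u, v)) : Set (Sym2 V))).Reachable u x) p
      (SimpleGraph.Reachable.refl _) hnr
    have habTn : s(a, b) ∈ Tn := by
      have h1 := p.edges_subset_edgeSet habm
      rw [SimpleGraph.edgeSet_fromEdgeSet] at h1
      exact Finset.mem_coe.1 h1.1
    have habG : s(a, b) ∈ G.edgeSet := hTnG (Finset.mem_coe.2 habTn)
    have hab : a ≠ b := habadj.ne
    have habT : s(a, b) ∉ T := by
      intro hmem
      have hne : s(a, b) ≠ s(u, v) := fun hh => heTn (hh ▸ habTn)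
      have : (SimpleGraph.fromEdgeSet (↑(T.erase s(u, v)) : Set (Sym2 V))).Adj a b := by
        rw [SimpleGraph.fromEdgeSet_adj]
        exact ⟨Finset.mem_coe.2 (Finset.mem_erase.2 ⟨hne, hmem⟩), hab⟩
      exact hQb (hQa.trans this.reachable)
    -- b is in the component of v in T - e
    have hbv : (SimpleGraph.fromEdgeSet
        (↑(T.erase s(u, v)) : Set (Sym2 V))).Reachable b v := by
      have hsupb : b ∈ p.support := p.snd_mem_support_of_mem_edges habm
      have hub_G : G.Reachable u b := ⟨(p.takeUntil b hsupb).mapLe hTnle⟩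
      obtain ⟨q⟩ := (hT.1.2.2 u b hub_G).symm
      rcases MSFAux.reachable_erase_split (u := u) (v := v) q with h | h
      · exact absurd h.symm hQb
      · exact h
    have hwf : w s(a, b) < w s(u, v) := hlight _ habm
    -- the swapped forest
    set T' : Finset (Sym2 V) := insert s(a, b) (T.erase s(u, v)) with hT'def
    have hle : SimpleGraph.fromEdgeSet (↑(T.erase s(u, v)) : Set (Sym2 V)) ≤
        SimpleGraph.fromEdgeSet (↑T' : Set (Sym2 V)) := by
      apply SimpleGraph.fromEdgeSet_mono
      intro g hg
      exact Finset.mem_coe.2 (Finset.mem_insert_of_mem (Finset.mem_coe.1 hg))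
    have habadj' : (SimpleGraph.fromEdgeSet (↑T' : Set (Sym2 V))).Adj a b := by
      rw [SimpleGraph.fromEdgeSet_adj]
      exact ⟨Finset.mem_coe.2 (Finset.mem_insert_self _ _), hab⟩
    have hSF : IsSpanningForest G T' := by
      refine ⟨?_, ?_, ?_⟩
      · intro g hg
        rcases Finset.mem_insert.mp (Finset.mem_coe.1 hg) with rfl | hg'
        · exact habG
        · exact hT.1.1 (Finset.mem_coe.2 (Finset.mem_of_mem_erase hg'))
      · refine MSFAux.isAcyclic_insert ?_ ?_
        · exact MSFAux.isAcyclic_mono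
            (SimpleGraph.fromEdgeSet_mono (Finset.coe_subset.2 (Finset.erase_subset _ _)))
            hT.1.2.1
        · exact fun h => hQb (hQa.trans h)
      · intro x y hxy
        refine MSFAux.reachable_of_adj_reachable ?_ (hT.1.2.2 x y hxy)
        intro c d hcd
        rw [SimpleGraph.fromEdgeSet_adj] at hcd
        by_cases hcduv : s(c, d) = s(u, v)
        · -- replace e by the detour through the crossing edge
          have huvT' : (SimpleGraph.fromEdgeSet (↑T' : Set (Sym2 V))).Reachable u v :=
            ((hQa.mono hle).trans habadj'.reachable).trans ((hbv.mono hle))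
          rcases Sym2.eq_iff.mp hcduv with ⟨rfl, rfl⟩ | ⟨rfl, rfl⟩
          · exact huvT'
          · exact huvT'.symm
        · have : (SimpleGraph.fromEdgeSet
              (↑(T.erase s(u, v)) : Set (Sym2 V))).Adj c d := by
            rw [SimpleGraph.fromEdgeSet_adj]
            exact ⟨Finset.mem_coe.2 (Finset.mem_erase.2 ⟨hcduv, Finset.mem_coe.1 hcd.1⟩),
              hcd.2⟩
          exact (hle this).reachable
    have hsum : ∑ e ∈ T', w e = w s(a, b) + (∑ e ∈ T, w e - w s(u, v)) := by
      rw [hT'def, Finset.sum_insert (fun hc => habT (Finset.mem_of_mem_erase hc)),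
        Finset.sum_erase_eq_sub heT]
    have hmin := hT.2 T' hSF
    rw [hsum] at hmin
    linarith
  have key : ∀ e : Sym2 V, e ∈ En → e ∉ Tn → e ∉ T := by
    intro e
    induction e using Sym2.ind with
    | _ u v => exact key' u v
  constructor
  · ext e
    simp only [Finset.mem_inter, Finset.mem_sdiff, Finset.notMem_empty, iff_false, not_and]
    intro h1 h2
    exact fun h3 => key e h2 h3 h1
  · ext e
    simp only [Finset.mem_sdiff, Finset.mem_union, not_or]
    constructor
    · rintro ⟨h1, h2⟩
      exact ⟨h1, key e h1 h2, h2⟩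
    · rintro ⟨h1, _, h3⟩
      exact ⟨h1, h3⟩
end

section
/- Let G = (V,E) be the complete graph on N vertices (N finite) with injective positive edge weights, and let T be its unique minimum spanning tree. For a vertex subset S ⊆ V with |S| = n, where 2 ≤ n ≤ N, let T_S denote the unique minimum spanning tree of the subgraph induced by S (which is complete, hence connected, so |T_S| = n − 1). Then the sum over all n-element subsets S of V of |T ∩ T_S| equals (n/N)·(n−1)·C(N,n), where C(N,n) is the binomial coefficient. Equivalently, if S is chosen uniformly at random among n-element subsets of V, then E(|T ∩ T_S| / |T_S|) = n/N, and for an edge e chosen uniformly at random from E independently of S, P(e ∈ T | e ∈ T_S) = n/N. -/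
/-- `T` is a spanning tree of `G`: an acyclic set of edges of `G` such that every vertex
is an endpoint of some edge in `T` and the graph `(V, T)` is connected. -/
def IsSpanningTree {V : Type*} (G : SimpleGraph V) (T : Finset (Sym2 V)) : Prop :=
  (T : Set (Sym2 V)) ⊆ G.edgeSet ∧
    (∀ v : V, ∃ e ∈ T, v ∈ e) ∧
    (SimpleGraph.fromEdgeSet (T : Set (Sym2 V))).IsAcyclic ∧
    (SimpleGraph.fromEdgeSet (T : Set (Sym2 V))).Connected

/-- `T` is a minimum spanning tree of `G` with respect to the weights `w`. -/
def IsMST {V : Type*} (G : SimpleGraph V) (w : Sym2 V → ℝ) (T : Finset (Sym2 V)) : Prop :=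
  IsSpanningTree G T ∧
    ∀ T' : Finset (Sym2 V), IsSpanningTree G T' → ∑ e ∈ T, w e ≤ ∑ e ∈ T', w e

/-- The edge set of the subgraph of the complete graph induced by `S`: all edges with
both endpoints in `S`. -/
def inducedEdges {V : Type*} (G : SimpleGraph V) (S : Finset V) : Set (Sym2 V) :=
  {e ∈ G.edgeSet | ∀ v ∈ e, v ∈ S}

section helpers
open SimpleGraph
set_option linter.unusedSectionVars false
variable {V : Type*} [Fintype V] [DecidableEq V]

lemma acyclic_mono {G H : SimpleGraph V} (hle : G ≤ H) (hH : H.IsAcyclic) : G.IsAcyclic := by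
  intro x c hc
  exact hH (c.map (Hom.ofLE hle))
    ((Walk.map_isCycle_iff_of_injective (fun a b h => h)).2 hc)

lemma acyclic_insert {s : Set (Sym2 V)} {u v : V}
    (hac : (fromEdgeSet s).IsAcyclic) (hnr : ¬(fromEdgeSet s).Reachable u v) :
    (fromEdgeSet (insert s(u,v) s)).IsAcyclic := by
  intro x c hc
  by_cases he : s(u,v) ∈ c.edges
  · have h2 := (adj_and_reachable_delete_edges_iff_exists_cycle.mpr ⟨x, c, hc, he⟩).2
    refine hnr (h2.mono ?_)
    intro a b hab
    rw [deleteEdges_adj, fromEdgeSet_adj] at hab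
    rw [fromEdgeSet_adj]
    rcases hab with ⟨⟨hm, hne⟩, hn⟩
    rcases Set.mem_insert_iff.1 hm with h | h
    · exact absurd (by simpa using h) hn
    · exact ⟨h, hne⟩
  · refine hac (c.transfer (fromEdgeSet s) ?_) (hc.transfer _)
    intro f hf
    have := c.edges_subset_edgeSet hf
    rw [edgeSet_fromEdgeSet] at this ⊢
    rcases this with ⟨hm, hd⟩
    rcases Set.mem_insert_iff.1 hm with h | h
    · exact absurd (h ▸ hf) he
    · exact ⟨h, hd⟩

lemma reach_delete {G : SimpleGraph V} {x y : V}
    (hxy : (G \ fromEdgeSet {s(x,y)}).Reachable x y) :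
    ∀ {a b : V}, G.Reachable a b → (G \ fromEdgeSet {s(x,y)}).Reachable a b := by
  intro a b ⟨p⟩
  induction p with
  | nil => exact Reachable.refl _
  | @cons a c b h q ih =>
    refine Reachable.trans ?_ ih
    by_cases hf : s(a,c) = s(x,y)
    · rcases Sym2.eq_iff.1 hf with ⟨rfl, rfl⟩ | ⟨rfl, rfl⟩
      · exact hxy
      · exact hxy.symm
    · exact Adj.reachable ⟨h, by rw [fromEdgeSet_adj]; exact fun hh => hf hh.1⟩

lemma path_edge_lt {H : SimpleGraph V} {w : Sym2 V → ℝ} (hinj : Set.InjOn w H.edgeSet)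
    {F : Finset (Sym2 V)} (hF : IsMSF H w F) {u v : V} (he : H.Adj u v)
    (heF : s(u,v) ∉ F) {p : (fromEdgeSet (F : Set (Sym2 V))).Walk u v} (hp : p.IsPath)
    {x y : V} (hf : s(x,y) ∈ p.edges) : w s(x,y) < w s(u,v) := by
  have hFsub := hF.1.1
  have hacF := hF.1.2.1
  have hfF : s(x,y) ∈ F := by
    have := p.edges_subset_edgeSet hf
    rw [edgeSet_fromEdgeSet] at this
    exact this.1
  have hfe : s(x,y) ≠ s(u,v) := fun h => heF (h ▸ hfF)
  have hfH : s(x,y) ∈ H.edgeSet := hFsub hfF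
  have heH : s(u,v) ∈ H.edgeSet := he
  have hwne : w s(x,y) ≠ w s(u,v) := fun h => hfe (hinj hfH heH h)
  by_contra hlt
  have hwlt : w s(u,v) < w s(x,y) := lt_of_le_of_ne (not_lt.1 hlt) (Ne.symm hwne)
  set F' : Finset (Sym2 V) := insert s(u,v) (F.erase s(x,y)) with hF'
  have hnr : ¬ (fromEdgeSet ((F.erase s(x,y) : Finset (Sym2 V)) : Set (Sym2 V))).Reachable u v := by
    rintro ⟨q⟩
    have hsub2 : ∀ e' ∈ q.bypass.edges, e' ∈ (fromEdgeSet (F : Set (Sym2 V))).edgeSet := by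
      intro e' he'
      have h1 := q.edges_subset_edgeSet (q.edges_bypass_subset he')
      rw [edgeSet_fromEdgeSet] at h1
      rw [edgeSet_fromEdgeSet]
      rw [Finset.coe_erase] at h1
      exact ⟨h1.1.1, h1.2⟩
    have hq' : (q.bypass.transfer (fromEdgeSet (F : Set (Sym2 V))) hsub2).IsPath := q.bypass_isPath.transfer _
    have hun := isAcyclic_iff_path_unique.1 hacF ⟨p, hp⟩ ⟨_, hq'⟩
    have hpq : p = q.bypass.transfer (fromEdgeSet (F : Set (Sym2 V))) hsub2 := congrArg Subtype.val hun
    rw [hpq, Walk.edges_transfer] at hf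
    have h2 := q.edges_subset_edgeSet (q.edges_bypass_subset hf)
    rw [edgeSet_fromEdgeSet, Finset.coe_erase] at h2
    exact h2.1.2 rfl
  have hST : IsSpanningForest H F' := by
    refine ⟨?_, ?_, ?_⟩
    · intro e' he'
      rw [hF', Finset.coe_insert, Set.mem_insert_iff] at he'
      rcases he' with rfl | he'
      · exact heH
      · exact hFsub (Finset.erase_subset _ _ he')
    · rw [hF', Finset.coe_insert]
      exact acyclic_insert
        (acyclic_mono (fromEdgeSet_mono (by rw [Finset.coe_erase]; exact Set.diff_subset)) hacF) hnr
    · intro a b hab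
      have h1 : (fromEdgeSet (F : Set (Sym2 V))).Reachable a b := hF.1.2.2 a b hab
      have hle1 : (fromEdgeSet (F : Set (Sym2 V))) ≤ (fromEdgeSet (insert s(u,v) (F : Set (Sym2 V)))) := fromEdgeSet_mono (Set.subset_insert _ _)
      have hpe : ∀ e' ∈ p.edges, e' ∈ (fromEdgeSet (insert s(u,v) (F : Set (Sym2 V)))).edgeSet := by
        intro e' he'
        have h2 := p.edges_subset_edgeSet he'
        rw [edgeSet_fromEdgeSet] at h2
        rw [edgeSet_fromEdgeSet]
        exact ⟨Set.mem_insert_of_mem _ h2.1, h2.2⟩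
      set p2 := (p.transfer (fromEdgeSet (insert s(u,v) (F : Set (Sym2 V)))) hpe).reverse with hp2def
      have hp2 : p2.IsPath := (hp.transfer hpe).reverse
      have hadjG : (fromEdgeSet (insert s(u,v) (F : Set (Sym2 V)))).Adj u v := by
        rw [fromEdgeSet_adj]
        exact ⟨Set.mem_insert _ _, he.ne⟩
      have hnep : s(u,v) ∉ p2.edges := by
        rw [hp2def, Walk.edges_reverse, List.mem_reverse, Walk.edges_transfer]
        intro hmem
        have := p.edges_subset_edgeSet hmem
        rw [edgeSet_fromEdgeSet] at this
        exact heF this.1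
      have hcyc : (Walk.cons hadjG p2).IsCycle := Path.cons_isCycle ⟨p2, hp2⟩ hadjG hnep
      have hfc : s(x,y) ∈ (Walk.cons hadjG p2).edges := by
        rw [hp2def]
        simp only [Walk.edges_cons, Walk.edges_reverse, List.mem_cons, List.mem_reverse,
          Walk.edges_transfer]
        exact Or.inr hf
      have hbr := (adj_and_reachable_delete_edges_iff_exists_cycle.mpr
        ⟨u, Walk.cons hadjG p2, hcyc, hfc⟩).2
      have h3 := reach_delete hbr (h1.mono hle1)
      have hEq : (fromEdgeSet (insert s(u,v) (F : Set (Sym2 V)))) \ fromEdgeSet {s(x,y)} = fromEdgeSet ((F' : Finset (Sym2 V)) : Set (Sym2 V)) := by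
        ext a' b'
        rw [sdiff_adj, fromEdgeSet_adj, fromEdgeSet_adj, fromEdgeSet_adj, hF',
          Finset.coe_insert, Finset.coe_erase]
        simp only [Set.mem_insert_iff, Set.mem_diff, Set.mem_singleton_iff, Finset.mem_coe]
        constructor
        · rintro ⟨⟨hm, hne⟩, hn⟩
          have hne2 : ¬ s(a',b') = s(x,y) := fun hh => hn ⟨hh, hne⟩
          rcases hm with h | h
          · exact ⟨Or.inl h, hne⟩
          · exact ⟨Or.inr ⟨h, hne2⟩, hne⟩
        · rintro ⟨hm, hne⟩
          rcases hm with h | h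
          · exact ⟨⟨Or.inl h, hne⟩, fun hh => hfe (hh.1.symm.trans h)⟩
          · exact ⟨⟨Or.inr h.1, hne⟩, fun hh => h.2 hh.1⟩
      rw [hEq] at h3
      exact h3
  have hsum := hF.2 F' hST
  have hsum' : ∑ e' ∈ F', w e' < ∑ e' ∈ F, w e' := by
    rw [hF', Finset.sum_insert (fun hh => heF (Finset.erase_subset _ _ hh)),
      ← Finset.add_sum_erase F w hfF]
    exact add_lt_add_of_lt_of_le hwlt le_rfl
  exact absurd hsum (not_le.2 hsum')

lemma side_lemma {G : SimpleGraph V} {v a u : V} (p : G.Walk a u) :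
    (G \ fromEdgeSet {s(u,v)}).Reachable a u ∨ (G \ fromEdgeSet {s(u,v)}).Reachable a v := by
  induction p with
  | nil => exact Or.inl (Reachable.refl _)
  | @cons a c u h q ih =>
    by_cases hf : s(a,c) = s(u,v)
    · rcases Sym2.eq_iff.1 hf with ⟨h1, h2⟩ | ⟨h1, h2⟩
      · subst h1; subst h2; exact Or.inl (Reachable.refl _)
      · subst h1; subst h2; exact Or.inr (Reachable.refl _)
    · have hadj : (G \ fromEdgeSet {s(u,v)}).Adj a c :=
        ⟨h, by rw [fromEdgeSet_adj]; exact fun hh => hf hh.1⟩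
      rcases ih with h1 | h1
      · exact Or.inl (hadj.reachable.trans h1)
      · exact Or.inr (hadj.reachable.trans h1)

lemma cross_cut {G H : SimpleGraph V} {u v : V} (p : H.Walk u v)
    (hnr : ¬G.Reachable u v) :
    ∃ x y : V, s(x,y) ∈ p.edges ∧ ¬G.Reachable x y ∧ H.Adj x y := by
  induction p with
  | nil => exact absurd (Reachable.refl _) hnr
  | @cons a c d h q ih =>
    by_cases hr : G.Reachable c d
    · refine ⟨a, c, by simp, fun hh => hnr (hh.trans hr), h⟩
    · obtain ⟨x, y, hm, h1, h2⟩ := ih hr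
      exact ⟨x, y, by simp [hm], h1, h2⟩

lemma covered {s : Finset (Sym2 V)} (h : (fromEdgeSet (s : Set (Sym2 V))).Connected)
    (hcard : 1 < Fintype.card V) : ∀ z : V, ∃ e ∈ s, z ∈ e := by
  intro z
  obtain ⟨z', hz'⟩ := Fintype.exists_ne_of_one_lt_card hcard z
  obtain ⟨p⟩ := h.preconnected z z'
  cases p with
  | nil => exact absurd rfl hz'
  | cons h q =>
    rw [fromEdgeSet_adj] at h
    exact ⟨_, h.1, Sym2.mem_mk_left _ _⟩


lemma forest_card {F : Finset (Sym2 V)} {S : Finset V}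
    (hsub : ∀ e ∈ F, ∀ x ∈ e, x ∈ S)
    (hnd : ∀ e ∈ F, ¬ e.IsDiag)
    (hac : (fromEdgeSet (F : Set (Sym2 V))).IsAcyclic)
    (hreach : ∀ u ∈ S, ∀ v ∈ S, (fromEdgeSet (F : Set (Sym2 V))).Reachable u v)
    (hne : S.Nonempty) : F.card + 1 = S.card := by
  classical
  set K : SimpleGraph {x // x ∈ S} :=
    SimpleGraph.comap (Subtype.val) (fromEdgeSet (F : Set (Sym2 V))) with hK
  have lift : ∀ {a b : V} (p : (fromEdgeSet (F : Set (Sym2 V))).Walk a b)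
      (ha : a ∈ S) (hb : b ∈ S), K.Reachable ⟨a, ha⟩ ⟨b, hb⟩ := by
    intro a b p
    induction p with
    | nil => intro ha hb; exact Reachable.refl _
    | @cons a c b h q ih =>
      intro ha hb
      have hmem : s(a,c) ∈ F := by
        rw [fromEdgeSet_adj] at h
        exact h.1
      have hc : c ∈ S := hsub _ hmem c (Sym2.mem_mk_right a c)
      have hadj : K.Adj ⟨a, ha⟩ ⟨c, hc⟩ := by
        rw [hK, comap_adj]
        rw [fromEdgeSet_adj] at h ⊢
        exact h
      exact hadj.reachable.trans (ih hc hb)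
  have hKac : K.IsAcyclic := by
    intro x c hc
    exact hac
      (c.map (SimpleGraph.Embedding.comap (Function.Embedding.subtype _)
        (fromEdgeSet (F : Set (Sym2 V)))).toHom)
      ((Walk.map_isCycle_iff_of_injective (Subtype.val_injective)).2 hc)
  have : Nonempty {x // x ∈ S} := ⟨⟨hne.choose, hne.choose_spec⟩⟩
  have htree : K.IsTree := by
    constructor
    · constructor
      intro a b
      obtain ⟨p⟩ := hreach a a.2 b b.2
      have := lift p a.2 b.2
      simpa using this
    · exact hKac
  have hcard := htree.card_edgeFinset
  rw [Fintype.card_coe] at hcard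
  rw [← hcard]
  congr 1
  have himg : K.edgeFinset.image (Sym2.map Subtype.val) = F := by
    ext e
    simp only [Finset.mem_image, mem_edgeFinset]
    constructor
    · rintro ⟨e', he', rfl⟩
      induction e' using Sym2.ind with
      | _ a b =>
        rw [mem_edgeSet, hK, comap_adj, fromEdgeSet_adj] at he'
        rw [Sym2.map_pair_eq]
        exact he'.1
    · intro heF
      induction e using Sym2.ind with
      | _ a b =>
        have ha : a ∈ S := hsub _ heF a (Sym2.mem_mk_left a b)
        have hb : b ∈ S := hsub _ heF b (Sym2.mem_mk_right a b)
        have hab : a ≠ b := by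
          intro h
          exact hnd _ heF (by rw [h]; exact Sym2.mk_isDiag_iff.2 rfl)
        refine ⟨s(⟨a, ha⟩, ⟨b, hb⟩), ?_, by rw [Sym2.map_pair_eq]⟩
        rw [mem_edgeSet, hK, comap_adj, fromEdgeSet_adj]
        exact ⟨heF, hab⟩
  have hci := Finset.card_image_of_injective K.edgeFinset
    (Sym2.map.injective Subtype.val_injective)
  rw [himg] at hci
  exact hci


lemma fromEdgeSet_finset_erase (F : Finset (Sym2 V)) (e : Sym2 V) :
    fromEdgeSet (F : Set (Sym2 V)) \ fromEdgeSet {e}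
      = fromEdgeSet ((F.erase e : Finset (Sym2 V)) : Set (Sym2 V)) := by
  ext a b
  rw [sdiff_adj, fromEdgeSet_adj, fromEdgeSet_adj, fromEdgeSet_adj, Finset.coe_erase]
  simp only [Set.mem_singleton_iff, Set.mem_diff, Finset.mem_coe]
  tauto

lemma key_lemma {w : Sym2 V → ℝ} (hinj : Set.InjOn w (⊤ : SimpleGraph V).edgeSet)
    {T : Finset (Sym2 V)} (hT : IsMST (⊤ : SimpleGraph V) w T)
    {S : Finset V} {F : Finset (Sym2 V)}
    (hF : IsMSF (SimpleGraph.fromEdgeSet (inducedEdges (⊤ : SimpleGraph V) S)) w F)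
    (hcard2 : 2 ≤ Fintype.card V)
    {u v : V} (huv : u ≠ v) (hu : u ∈ S) (hv : v ∈ S) (heT : s(u,v) ∈ T) :
    s(u,v) ∈ F := by
  classical
  obtain ⟨⟨hsub, hcov, hac, hconn⟩, hmin⟩ := hT
  by_contra heF
  -- the induced host graph
  have hindsub : inducedEdges (⊤ : SimpleGraph V) S ⊆ (⊤ : SimpleGraph V).edgeSet :=
    fun e he => he.1
  have hadjH : (fromEdgeSet (inducedEdges (⊤ : SimpleGraph V) S)).Adj u v := by
    rw [fromEdgeSet_adj]
    refine ⟨⟨?_, ?_⟩, huv⟩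
    · rw [mem_edgeSet]; exact huv
    · intro x hx
      rcases Sym2.mem_iff.1 hx with rfl | rfl
      · exact hu
      · exact hv
  have hHsub : (fromEdgeSet (inducedEdges (⊤ : SimpleGraph V) S)).edgeSet
      ⊆ (⊤ : SimpleGraph V).edgeSet := by
    rw [edgeSet_fromEdgeSet]
    exact fun e he => hindsub he.1
  obtain ⟨q⟩ := hF.1.2.2 u v hadjH.reachable
  set p := q.bypass with hpdef
  have hp : p.IsPath := q.bypass_isPath
  -- u,v not reachable after deleting the tree edge
  have hbridge := isAcyclic_iff_forall_adj_isBridge.1 hac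
    (show (fromEdgeSet (T : Set (Sym2 V))).Adj u v by
      rw [fromEdgeSet_adj]; exact ⟨heT, huv⟩)
  have hDeq := fromEdgeSet_finset_erase T s(u,v)
  have hnruv : ¬(fromEdgeSet ((T.erase s(u,v) : Finset (Sym2 V)) : Set (Sym2 V))).Reachable u v := by
    rw [← hDeq]
    exact isBridge_iff.1 hbridge
  obtain ⟨x, y, hxyp, hxynr, hxyadj⟩ := cross_cut p hnruv
  have hxyne : x ≠ y := hxyadj.ne
  have hxyF : s(x,y) ∈ F := by
    have := p.edges_subset_edgeSet hxyp
    rw [edgeSet_fromEdgeSet] at this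
    exact this.1
  have hfe' : s(x,y) ≠ s(u,v) := fun h => heF (h ▸ hxyF)
  have wlt : w s(x,y) < w s(u,v) :=
    path_edge_lt (hinj.mono hHsub) hF hadjH heF hp hxyp
  have hxyT : s(x,y) ∉ T := by
    intro h
    refine hxynr (Adj.reachable ?_)
    rw [fromEdgeSet_adj]
    exact ⟨Finset.mem_coe.2 (Finset.mem_erase.2 ⟨hfe', h⟩), hxyne⟩
  set T' : Finset (Sym2 V) := insert s(x,y) (T.erase s(u,v)) with hT'def
  have hle : fromEdgeSet ((T.erase s(u,v) : Finset (Sym2 V)) : Set (Sym2 V))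
      ≤ fromEdgeSet (T' : Set (Sym2 V)) :=
    fromEdgeSet_mono (Finset.coe_subset.2 (Finset.subset_insert _ _))
  have hadjM : (fromEdgeSet (T' : Set (Sym2 V))).Adj x y := by
    rw [fromEdgeSet_adj]
    exact ⟨Finset.mem_coe.2 (Finset.mem_insert_self _ _), hxyne⟩
  have hside : ∀ a : V, (fromEdgeSet ((T.erase s(u,v) : Finset (Sym2 V)) : Set (Sym2 V))).Reachable a u
      ∨ (fromEdgeSet ((T.erase s(u,v) : Finset (Sym2 V)) : Set (Sym2 V))).Reachable a v := by
    intro a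
    obtain ⟨pa⟩ := hconn.preconnected a u
    have := side_lemma (v := v) pa
    rw [hDeq] at this
    exact this
  have huvM : (fromEdgeSet (T' : Set (Sym2 V))).Reachable u v := by
    rcases hside x with hx | hx <;> rcases hside y with hy | hy
    · exact absurd (hx.trans hy.symm) hxynr
    · exact ((hx.mono hle).symm).trans ((hadjM.reachable).trans (hy.mono hle))
    · exact ((hy.mono hle).symm).trans ((hadjM.symm.reachable).trans (hx.mono hle))
    · exact absurd (hx.trans hy.symm) hxynr
  have hpre : (fromEdgeSet (T' : Set (Sym2 V))).Preconnected := by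
    intro a b
    rcases hside a with ha | ha <;> rcases hside b with hb | hb
    · exact (ha.mono hle).trans (hb.mono hle).symm
    · exact (ha.mono hle).trans (huvM.trans (hb.mono hle).symm)
    · exact (ha.mono hle).trans (huvM.symm.trans (hb.mono hle).symm)
    · exact (ha.mono hle).trans (hb.mono hle).symm
  have : Nonempty V := Fintype.card_pos_iff.1 (by omega)
  have hconn' : (fromEdgeSet (T' : Set (Sym2 V))).Connected := ⟨hpre⟩
  have hT'span : IsSpanningTree (⊤ : SimpleGraph V) T' := by
    refine ⟨?_, ?_, ?_, hconn'⟩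
    · intro e' he'
      rw [hT'def, Finset.coe_insert, Set.mem_insert_iff] at he'
      rcases he' with rfl | he'
      · rw [mem_edgeSet]; exact hxyne
      · exact hsub (Finset.erase_subset _ _ he')
    · exact covered hconn' (by omega)
    · rw [hT'def, Finset.coe_insert]
      exact acyclic_insert
        (acyclic_mono (fromEdgeSet_mono (by rw [Finset.coe_erase]; exact Set.diff_subset)) hac)
        hxynr
  have hsum := hmin T' hT'span
  have hsum' : ∑ e' ∈ T', w e' < ∑ e' ∈ T, w e' := by
    rw [hT'def, Finset.sum_insert (fun hh => hxyT (Finset.erase_subset _ _ hh)),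
      ← Finset.add_sum_erase T w heT]
    exact add_lt_add_of_lt_of_le wlt le_rfl
  exact absurd hsum (not_le.2 hsum')

lemma count_subsets {u v : V} (huv : u ≠ v) {N n : ℕ} (hN : Fintype.card V = N)
    (hn : 2 ≤ n) :
    ((Finset.univ.powersetCard n).filter (fun S : Finset V => u ∈ S ∧ v ∈ S)).card
      = (N-2).choose (n-2) := by
  classical
  have htarget : (((Finset.univ.erase u).erase v).powersetCard (n-2)).card
      = (N-2).choose (n-2) := by
    rw [Finset.card_powersetCard, Finset.card_erase_of_mem
      (Finset.mem_erase.2 ⟨Ne.symm huv, Finset.mem_univ v⟩), Finset.card_erase_of_mem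
      (Finset.mem_univ u), Finset.card_univ, hN]
    congr 1
  rw [← htarget]
  refine Finset.card_bij' (fun S _ => (S.erase u).erase v)
    (fun S' _ => insert u (insert v S')) ?_ ?_ ?_ ?_
  · intro S hS
    simp only [Finset.mem_filter, Finset.mem_powersetCard] at hS
    obtain ⟨⟨hsub, hcard⟩, hu, hv⟩ := hS
    have hv' : v ∈ S.erase u := Finset.mem_erase.2 ⟨Ne.symm huv, hv⟩
    rw [Finset.mem_powersetCard]
    constructor
    · intro x hx
      simp only [Finset.mem_erase] at hx ⊢
      exact ⟨hx.1, hx.2.1, Finset.mem_univ x⟩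
    · rw [Finset.card_erase_of_mem hv', Finset.card_erase_of_mem hu, hcard]
      omega
  · intro S' hS'
    rw [Finset.mem_powersetCard] at hS'
    obtain ⟨hsub, hcard⟩ := hS'
    have hu' : u ∉ insert v S' := by
      rw [Finset.mem_insert]
      rintro (rfl | h)
      · exact huv rfl
      · have := hsub h
        rw [Finset.mem_erase, Finset.mem_erase] at this
        exact this.2.1 rfl
    have hv' : v ∉ S' := fun h => by
      have := hsub h
      rw [Finset.mem_erase] at this
      exact this.1 rfl
    simp only [Finset.mem_filter, Finset.mem_powersetCard]
    refine ⟨⟨fun x _ => Finset.mem_univ x, ?_⟩, Finset.mem_insert_self _ _,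
      Finset.mem_insert_of_mem (Finset.mem_insert_self _ _)⟩
    rw [Finset.card_insert_of_notMem hu', Finset.card_insert_of_notMem hv', hcard]
    omega
  · intro S hS
    simp only [Finset.mem_filter, Finset.mem_powersetCard] at hS
    obtain ⟨⟨hsub, hcard⟩, hu, hv⟩ := hS
    have hv' : v ∈ S.erase u := Finset.mem_erase.2 ⟨Ne.symm huv, hv⟩
    rw [Finset.insert_erase hv', Finset.insert_erase hu]
  · intro S' hS'
    rw [Finset.mem_powersetCard] at hS'
    have hu' : u ∉ insert v S' := by
      rw [Finset.mem_insert]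
      rintro (rfl | h)
      · exact huv rfl
      · have := hS'.1 h
        rw [Finset.mem_erase, Finset.mem_erase] at this
        exact this.2.1 rfl
    have hv' : v ∉ S' := fun h => by
      have := hS'.1 h
      rw [Finset.mem_erase] at this
      exact this.1 rfl
    rw [Finset.erase_insert hu', Finset.erase_insert hv']

end helpers

open SimpleGraph in
/-- For the complete graph on `N` vertices with distinct positive edge weights,
MST `T`, and, for each `n`-subset `S` of the vertices (`2 ≤ n ≤ N`), the MST `T_S` of
the subgraph induced by `S` (of cardinality `n - 1`):
the sum over all `n`-subsets `S` of `|T ∩ T_S|` equals `(n/N)·(n-1)·C(N,n)`;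
equivalently, for `S` uniform over `n`-subsets, `E(|T ∩ T_S|/|T_S|) = n/N`, and for `e`
uniform over the edges, independent of `S`, `P(e ∈ T ∣ e ∈ T_S) = n/N`, both expressed
as ratios of the corresponding sums of counts. -/
theorem complete_graph_ppv {V : Type*} [Fintype V] [DecidableEq V]
    (w : Sym2 V → ℝ) (N n : ℕ) (hN : Fintype.card V = N)
    (hn : 2 ≤ n) (hnN : n ≤ N)
    (hpos : ∀ e ∈ (⊤ : SimpleGraph V).edgeSet, 0 < w e)
    (hinj : Set.InjOn w (⊤ : SimpleGraph V).edgeSet)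
    (T : Finset (Sym2 V)) (hT : IsMST (⊤ : SimpleGraph V) w T)
    (TS : Finset V → Finset (Sym2 V))
    (hTS : ∀ S ∈ Finset.univ.powersetCard n,
      IsMSF (SimpleGraph.fromEdgeSet (inducedEdges (⊤ : SimpleGraph V) S)) w (TS S)) :
    (∑ S ∈ Finset.univ.powersetCard n, ((T ∩ TS S).card : ℚ))
        = ((n : ℚ) / N) * ((n : ℚ) - 1) * (N.choose n) ∧
    (∑ S ∈ Finset.univ.powersetCard n, ((T ∩ TS S).card : ℚ) / ((TS S).card : ℚ))
        / (N.choose n : ℚ) = (n : ℚ) / N ∧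
    (∑ S ∈ Finset.univ.powersetCard n, ((T ∩ TS S).card : ℚ))
        / (∑ S ∈ Finset.univ.powersetCard n, ((TS S).card : ℚ)) = (n : ℚ) / N := by
  classical
  obtain ⟨k, rfl⟩ : ∃ k, n = k + 2 := ⟨n - 2, by omega⟩
  obtain ⟨m, rfl⟩ : ∃ m, N = m + 2 := ⟨N - 2, by omega⟩
  have hcard2 : 2 ≤ Fintype.card V := by rw [hN]; omega
  set P := (Finset.univ : Finset V).powersetCard (k+2) with hP
  have hTsub := hT.1.1
  have hTtop : ∀ e ∈ T, ¬ e.IsDiag := by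
    intro e he
    have := hTsub (Finset.mem_coe.2 he)
    rw [edgeSet_top] at this
    exact this
  -- intersection description
  have hint : ∀ S ∈ P, T ∩ TS S = T.filter (fun e => ∀ x ∈ e, x ∈ S) := by
    intro S hS
    ext e
    induction e using Sym2.ind with
    | _ u v =>
      simp only [Finset.mem_inter, Finset.mem_filter]
      constructor
      · rintro ⟨h1, h2⟩
        refine ⟨h1, ?_⟩
        have := (hTS S hS).1.1 (Finset.mem_coe.2 h2)
        rw [edgeSet_fromEdgeSet] at this
        exact this.1.2
      · rintro ⟨h1, h2⟩
        refine ⟨h1, ?_⟩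
        have huv : u ≠ v := by
          intro h
          exact hTtop _ h1 (by rw [h]; exact Sym2.mk_isDiag_iff.2 rfl)
        exact key_lemma hinj hT (hTS S hS) hcard2 huv
          (h2 u (Sym2.mem_mk_left u v)) (h2 v (Sym2.mem_mk_right u v)) h1
  -- cardinality of each TS S
  have hTScard : ∀ S ∈ P, (TS S).card = k + 1 := by
    intro S hS
    have hScard : S.card = k + 2 := (Finset.mem_powersetCard.1 hS).2
    have hsubS : ∀ e ∈ TS S, ∀ x ∈ e, x ∈ S := by
      intro e he x hx
      have := (hTS S hS).1.1 (Finset.mem_coe.2 he)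
      rw [edgeSet_fromEdgeSet] at this
      exact this.1.2 x hx
    have hndS : ∀ e ∈ TS S, ¬ e.IsDiag := by
      intro e he
      have := (hTS S hS).1.1 (Finset.mem_coe.2 he)
      rw [edgeSet_fromEdgeSet] at this
      exact this.2
    have hreachS : ∀ a ∈ S, ∀ b ∈ S,
        (fromEdgeSet ((TS S : Finset (Sym2 V)) : Set (Sym2 V))).Reachable a b := by
      intro a ha b hb
      by_cases hab : a = b
      · subst hab; exact Reachable.refl _
      · apply (hTS S hS).1.2.2
        apply Adj.reachable
        rw [fromEdgeSet_adj]
        refine ⟨⟨?_, ?_⟩, hab⟩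
        · rw [mem_edgeSet]; exact hab
        · intro x hx
          rcases Sym2.mem_iff.1 hx with rfl | rfl
          exacts [ha, hb]
    have hneS : S.Nonempty := Finset.card_pos.1 (by omega)
    have := forest_card hsubS hndS (hTS S hS).1.2.1 hreachS hneS
    omega
  -- cardinality of T
  have hTcard : T.card = m + 1 := by
    have hsubT : ∀ e ∈ T, ∀ x ∈ e, x ∈ (Finset.univ : Finset V) :=
      fun e _ x _ => Finset.mem_univ x
    have hreachT : ∀ a ∈ (Finset.univ : Finset V), ∀ b ∈ (Finset.univ : Finset V),
        (fromEdgeSet ((T : Finset (Sym2 V)) : Set (Sym2 V))).Reachable a b :=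
      fun a _ b _ => hT.1.2.2.2.preconnected a b
    have : Nonempty V := Fintype.card_pos_iff.1 (by omega)
    have hneT : (Finset.univ : Finset V).Nonempty := Finset.univ_nonempty
    have := forest_card hsubT hTtop hT.1.2.2.1 hreachT hneT
    rw [Finset.card_univ, hN] at this
    omega
  -- per-edge subset count
  have hedgecount : ∀ e ∈ T, (P.filter (fun S => ∀ x ∈ e, x ∈ S)).card = m.choose k := by
    intro e
    induction e using Sym2.ind with
    | _ u v =>
      intro he
      have huv : u ≠ v := by
        intro h
        exact hTtop _ he (by rw [h]; exact Sym2.mk_isDiag_iff.2 rfl)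
      have hpred : P.filter (fun S : Finset V => ∀ x ∈ s(u,v), x ∈ S)
          = P.filter (fun S => u ∈ S ∧ v ∈ S) := by
        refine Finset.filter_congr (fun S _ => ?_)
        refine ⟨fun h => ⟨h u (Sym2.mem_mk_left u v), h v (Sym2.mem_mk_right u v)⟩,
          fun h x hx => ?_⟩
        rcases Sym2.mem_iff.1 hx with rfl | rfl
        exacts [h.1, h.2]
      rw [hpred, hP, count_subsets huv hN (by omega)]
      congr 1
  -- the main natural-number sum
  have hsumnat : ∑ S ∈ P, (T ∩ TS S).card = (m+1) * m.choose k := by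
    calc ∑ S ∈ P, (T ∩ TS S).card
        = ∑ S ∈ P, (T.filter (fun e => ∀ x ∈ e, x ∈ S)).card :=
          Finset.sum_congr rfl (fun S hS => by rw [hint S hS])
      _ = ∑ S ∈ P, ∑ e ∈ T, (if ∀ x ∈ e, x ∈ S then 1 else 0) :=
          Finset.sum_congr rfl (fun S _ => Finset.card_filter _ _)
      _ = ∑ e ∈ T, ∑ S ∈ P, (if ∀ x ∈ e, x ∈ S then 1 else 0) := Finset.sum_comm
      _ = ∑ e ∈ T, (P.filter (fun S => ∀ x ∈ e, x ∈ S)).card :=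
          Finset.sum_congr rfl (fun e _ => (Finset.card_filter _ _).symm)
      _ = ∑ e ∈ T, m.choose k := Finset.sum_congr rfl hedgecount
      _ = T.card * m.choose k := by rw [Finset.sum_const, smul_eq_mul]
      _ = (m+1) * m.choose k := by rw [hTcard]
  have hPcard : P.card = (m+2).choose (k+2) := by
    rw [hP, Finset.card_powersetCard, Finset.card_univ, hN]
  -- Nat binomial identity
  have h1 := Nat.add_one_mul_choose_eq m k
  have h2 := Nat.add_one_mul_choose_eq (m+1) (k+1)
  have natid : (m+2) * ((m+1) * m.choose k) = ((k+2) * (k+1)) * (m+2).choose (k+2) := by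
    calc (m+2) * ((m+1) * m.choose k)
        = (m+2) * ((m+1).choose (k+1) * (k+1)) := by rw [← h1]
      _ = ((m+2) * (m+1).choose (k+1)) * (k+1) := by ring
      _ = ((m+2).choose (k+2) * (k+2)) * (k+1) := by rw [← h2]
      _ = ((k+2) * (k+1)) * (m+2).choose (k+2) := by ring
  have natidQ : ((m:ℚ)+2) * (((m:ℚ)+1) * (m.choose k : ℚ))
      = (((k:ℚ)+2) * ((k:ℚ)+1)) * ((m+2).choose (k+2) : ℚ) := by
    exact_mod_cast natid
  have hsumQ : (∑ S ∈ P, ((T ∩ TS S).card : ℚ)) = ((m:ℚ)+1) * (m.choose k : ℚ) := by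
    rw [← Nat.cast_sum, hsumnat]
    push_cast
    ring
  have hNne : ((m:ℚ)+2) ≠ 0 := by positivity
  have hkne : ((k:ℚ)+1) ≠ 0 := by positivity
  have hChoose : ((m+2).choose (k+2) : ℚ) ≠ 0 :=
    Nat.cast_ne_zero.2 (Nat.choose_pos (by omega)).ne'
  have goal1 : (∑ S ∈ P, ((T ∩ TS S).card : ℚ))
      = (((k:ℚ)+2) / ((m:ℚ)+2)) * (((k:ℚ)+2) - 1) * ((m+2).choose (k+2) : ℚ) := by
    rw [hsumQ]
    field_simp
    linear_combination natidQ
  have hcast1 : ((k+2 : ℕ) : ℚ) = (k:ℚ)+2 := by push_cast; ring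
  have hcast2 : ((m+2 : ℕ) : ℚ) = (m:ℚ)+2 := by push_cast; ring
  refine ⟨?_, ?_, ?_⟩
  · rw [goal1, hcast1, hcast2]
  · have hTSQ : ∀ S ∈ P, ((TS S).card : ℚ) = (k:ℚ)+1 := by
      intro S hS
      rw [hTScard S hS]
      push_cast
      ring
    have : (∑ S ∈ P, ((T ∩ TS S).card : ℚ) / ((TS S).card : ℚ))
        = (∑ S ∈ P, ((T ∩ TS S).card : ℚ)) / ((k:ℚ)+1) := by
      rw [Finset.sum_div]
      exact Finset.sum_congr rfl (fun S hS => by rw [hTSQ S hS])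
    rw [this, goal1, hcast1, hcast2]
    field_simp
    ring
  · have hden : (∑ S ∈ P, ((TS S).card : ℚ)) = ((k:ℚ)+1) * ((m+2).choose (k+2) : ℚ) := by
      rw [Finset.sum_congr rfl (fun S hS => by rw [hTScard S hS] : ∀ S ∈ P, ((TS S).card : ℚ) = ((k+1 : ℕ) : ℚ)),
        Finset.sum_const, hPcard, nsmul_eq_mul]
      push_cast
      ring
    rw [hden, goal1, hcast1, hcast2]
    rw [div_eq_div_iff (by positivity) hNne]
    field_simp
    ring
end

section
/- Let G = (V,E) be the complete graph on N vertices with injective positive edge weights, let p ∈ (0,1], and let 2 ≤ n ≤ N. Let E' ⊆ E be a random edge set in which each edge of E is included independently with probability p; let G' = (V, E') have unique minimum spanning forest T' and K' connected components. Independently, let S be a uniformly random n-element subset of V; let G'_S = (S, E'_S) be the subgraph of G' induced by S (E'_S = E' ∩ E_S, where E_S is the set of edges of E with both endpoints in S), with unique minimum spanning forest T'_S and K'_S connected components. Let e be an edge chosen uniformly at random from E, independently of E' and S. Then P(e ∈ T' | e ∈ T'_S) = (n(n−1))/(N(N−1)) · (N − E(K'))/(n − E(K'_S)). -/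
/-- The set of edges of `E'` having both endpoints in `S`. -/
def edgesWithin {V : Type*} (E' : Finset (Sym2 V)) (S : Finset V) : Set (Sym2 V) :=
  {e ∈ (E' : Set (Sym2 V)) | ∀ v ∈ e, v ∈ S}


section GnpPpvHelpers

open SimpleGraph

variable {V : Type*}


lemma reach_of_adj_reach {H K : SimpleGraph V}
    (h : ∀ a b : V, H.Adj a b → K.Reachable a b) {x y : V} (r : H.Reachable x y) :
    K.Reachable x y := by
  obtain ⟨p⟩ := r
  induction p with
  | nil => exact Reachable.refl _
  | cons ha p ih => exact (h _ _ ha).trans ih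

lemma reachable_split {H : SimpleGraph V} (u v : V) {x y : V} (hr : H.Reachable x y) :
    (H \ fromEdgeSet {s(u,v)}).Reachable x y ∨
    ((H \ fromEdgeSet {s(u,v)}).Reachable x u ∧ (H \ fromEdgeSet {s(u,v)}).Reachable v y) ∨
    ((H \ fromEdgeSet {s(u,v)}).Reachable x v ∧ (H \ fromEdgeSet {s(u,v)}).Reachable u y) := by
  set K := H \ fromEdgeSet {s(u,v)} with hK
  obtain ⟨p⟩ := hr
  induction p with
  | nil => exact Or.inl (Reachable.refl _)
  | @cons x z y ha p ih =>
    by_cases he : s(x, z) = s(u, v)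
    · rw [Sym2.eq_iff] at he
      rcases he with ⟨rfl, rfl⟩ | ⟨rfl, rfl⟩
      · rcases ih with h1 | ⟨h2a, h2b⟩ | ⟨h3a, h3b⟩
        · exact Or.inr (Or.inl ⟨Reachable.refl _, h1⟩)
        · exact Or.inr (Or.inl ⟨Reachable.refl _, h2b⟩)
        · exact Or.inl h3b
      · rcases ih with h1 | ⟨h2a, h2b⟩ | ⟨h3a, h3b⟩
        · exact Or.inr (Or.inr ⟨Reachable.refl _, h1⟩)
        · exact Or.inl h2b
        · exact Or.inr (Or.inr ⟨Reachable.refl _, h3b⟩)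
    · have hadj : K.Adj x z := by
        rw [hK, sdiff_adj, fromEdgeSet_adj]
        exact ⟨ha, fun hc => he hc.1⟩
      rcases ih with h1 | ⟨h2a, h2b⟩ | ⟨h3a, h3b⟩
      · exact Or.inl (hadj.reachable.trans h1)
      · exact Or.inr (Or.inl ⟨hadj.reachable.trans h2a, h2b⟩)
      · exact Or.inr (Or.inr ⟨hadj.reachable.trans h3a, h3b⟩)

lemma exists_crossing {H K : SimpleGraph V} {u x y : V} (p : H.Walk x y)
    (hx : K.Reachable u x) (hy : ¬K.Reachable u y) :
    ∃ c d : V, s(c, d) ∈ p.edges ∧ K.Reachable u c ∧ ¬K.Reachable u d := by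
  induction p with
  | nil => exact absurd hx hy
  | @cons x z y ha p ih =>
    by_cases hz : K.Reachable u z
    · obtain ⟨c, d, hm, h1, h2⟩ := ih hz hy
      exact ⟨c, d, List.mem_cons_of_mem _ hm, h1, h2⟩
    · exact ⟨x, z, List.mem_cons_self, hx, hz⟩

lemma acyclic_anti {H K : SimpleGraph V} (h : H ≤ K) (hK : K.IsAcyclic) : H.IsAcyclic := by
  intro v c hc
  exact hK (c.transfer K (fun e he => edgeSet_mono h (c.edges_subset_edgeSet he)))
    (hc.transfer _)

lemma cc_card_eq {H K : SimpleGraph V} (h1 : H ≤ K)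
    (h2 : ∀ x y : V, K.Reachable x y → H.Reachable x y) :
    Nat.card H.ConnectedComponent = Nat.card K.ConnectedComponent := by
  apply Nat.card_eq_of_bijective (ConnectedComponent.map (Hom.ofLE h1))
  constructor
  · intro c1 c2
    refine ConnectedComponent.ind₂ (fun x y hxy => ?_) c1 c2
    simp only [ConnectedComponent.map_mk, Hom.ofLE_apply] at hxy
    exact ConnectedComponent.sound (h2 _ _ (ConnectedComponent.exact hxy))
  · refine ConnectedComponent.ind (fun x => ?_)
    exact ⟨H.connectedComponentMk x, rfl⟩

lemma cc_card_delete [Finite V] {H : SimpleGraph V} {u v : V} (h : H.Adj u v)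
    (hb : ¬(H \ fromEdgeSet {s(u,v)}).Reachable u v) :
    Nat.card (H \ fromEdgeSet {s(u,v)}).ConnectedComponent
      = Nat.card H.ConnectedComponent + 1 := by
  classical
  set K := H \ fromEdgeSet {s(u,v)} with hKdef
  have hle : K ≤ H := sdiff_le
  have hbij : Function.Bijective
      (fun c : {c : K.ConnectedComponent // c ≠ K.connectedComponentMk v} =>
        ConnectedComponent.map (Hom.ofLE hle) c.1) := by
    constructor
    · rintro ⟨c1, hc1⟩ ⟨c2, hc2⟩ hvl
      obtain ⟨x, rfl⟩ := c1.exists_rep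
      obtain ⟨y, rfl⟩ := c2.exists_rep
      simp only [ConnectedComponent.map_mk, Hom.ofLE_apply] at hvl
      have hr : H.Reachable x y := ConnectedComponent.exact hvl
      have hx : ¬K.Reachable x v := fun hx => hc1 (ConnectedComponent.sound hx)
      have hy : ¬K.Reachable y v := fun hy => hc2 (ConnectedComponent.sound hy)
      rcases reachable_split u v hr with h1 | ⟨h2a, h2b⟩ | ⟨h3a, h3b⟩
      · exact Subtype.ext (ConnectedComponent.sound h1)
      · exact absurd h2b.symm hy
      · exact absurd h3a hx
    · intro c
      refine ConnectedComponent.ind (fun x => ?_) c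
      by_cases hx : K.Reachable x v
      · refine ⟨⟨K.connectedComponentMk u, fun hc => hb (ConnectedComponent.exact hc)⟩, ?_⟩
        simp only [ConnectedComponent.map_mk, Hom.ofLE_apply]
        exact ConnectedComponent.sound
          ((h.reachable.trans (hx.mono hle).symm))
      · refine ⟨⟨K.connectedComponentMk x, fun hc => hx (ConnectedComponent.exact hc)⟩, rfl⟩
  have h1 : Nat.card {c : K.ConnectedComponent // c ≠ K.connectedComponentMk v}
      = Nat.card H.ConnectedComponent := Nat.card_eq_of_bijective _ hbij
  have h2 : Nat.card {c : K.ConnectedComponent // c = K.connectedComponentMk v} = 1 := by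
    simp [Nat.card_eq_fintype_card]
  have h3 : Nat.card K.ConnectedComponent
      = Nat.card {c : K.ConnectedComponent // c = K.connectedComponentMk v}
        + Nat.card {c : K.ConnectedComponent // c ≠ K.connectedComponentMk v} := by
    rw [← Nat.card_sum]
    exact Nat.card_congr (Equiv.sumCompl _).symm
  omega

lemma forest_card_aux [Fintype V] :
    ∀ (k : ℕ) (H : SimpleGraph V), H.IsAcyclic → Nat.card H.edgeSet = k →
      k + Nat.card H.ConnectedComponent = Fintype.card V := by
  intro k
  induction k with
  | zero =>
    intro H hH hc
    have he : H.edgeSet = ∅ := by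
      have := Set.ncard_eq_zero (s := H.edgeSet) (Set.toFinite _)
      rw [Nat.card_coe_set_eq] at hc
      exact this.mp hc
    have hbot : H = ⊥ := edgeSet_eq_empty.mp he
    subst hbot
    rw [zero_add, ← Nat.card_eq_fintype_card]
    refine (Nat.card_eq_of_bijective (fun v => (⊥ : SimpleGraph V).connectedComponentMk v) ?_).symm
    constructor
    · intro a b hab
      simpa using ConnectedComponent.exact hab
    · exact ConnectedComponent.ind (fun x => ⟨x, rfl⟩)
  | succ k ih =>
    intro H hH hc
    have hne : H.edgeSet.Nonempty := by
      rw [Set.nonempty_iff_ne_empty]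
      intro hemp
      rw [Nat.card_coe_set_eq, hemp, Set.ncard_empty] at hc
      omega
    obtain ⟨e, he⟩ := hne
    obtain ⟨u, v, rfl⟩ : ∃ u v, s(u,v) = e := Sym2.ind (fun u v _ => ⟨u, v, rfl⟩) e he
    have hadj : H.Adj u v := H.mem_edgeSet.mp he
    set K := H \ fromEdgeSet {s(u,v)} with hKdef
    have hKle : K ≤ H := sdiff_le
    have hKedge : K.edgeSet = H.edgeSet \ {s(u,v)} := by
      rw [hKdef, edgeSet_sdiff, edgeSet_fromEdgeSet, edgeSet_sdiff_sdiff_isDiag]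
    have hKcard : Nat.card K.edgeSet = k := by
      rw [Nat.card_coe_set_eq, hKedge, Set.ncard_diff_singleton_of_mem he,
        ← Nat.card_coe_set_eq, hc]
      omega
    have hbridge : ¬K.Reachable u v := by
      have := (isAcyclic_iff_forall_adj_isBridge.mp hH) hadj
      exact isBridge_iff.mp this
    have := ih K (acyclic_anti hKle hH) hKcard
    have hdel := cc_card_delete hadj hbridge
    rw [← hKdef] at hdel
    omega

lemma forest_card_s9 [Fintype V] (H : SimpleGraph V) (hH : H.IsAcyclic) :
    Nat.card H.edgeSet + Nat.card H.ConnectedComponent = Fintype.card V :=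
  forest_card_aux _ H hH rfl

lemma spanningForest_card [Fintype V] {G : SimpleGraph V} {T : Finset (Sym2 V)}
    (hT : IsSpanningForest G T) :
    T.card + Nat.card G.ConnectedComponent = Fintype.card V := by
  classical
  set F := SimpleGraph.fromEdgeSet (T : Set (Sym2 V)) with hF
  have hFG : F ≤ G := le_of_le_of_eq (fromEdgeSet_mono hT.1) (fromEdgeSet_edgeSet G)
  have hedge : F.edgeSet = (T : Set (Sym2 V)) := by
    rw [edgeSet_fromEdgeSet]
    ext e
    simp only [Set.mem_diff, Set.mem_setOf_eq]
    exact ⟨fun h => h.1, fun h => ⟨h, G.not_isDiag_of_mem_edgeSet (hT.1 h)⟩⟩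
  have h1 := forest_card_s9 F hT.2.1
  have h2 : Nat.card F.edgeSet = T.card := by
    rw [Nat.card_coe_set_eq, hedge, Set.ncard_coe_finset]
  have h3 := cc_card_eq hFG hT.2.2
  omega

lemma msf_path_edge_lt {G : SimpleGraph V} {w : Sym2 V → ℝ} {T : Finset (Sym2 V)}
    (hinj : Set.InjOn w (⊤ : SimpleGraph V).edgeSet)
    (hT : IsMSF G w T) {a b : V} (hf : G.Adj a b) (hfT : s(a,b) ∉ T)
    {p : (SimpleGraph.fromEdgeSet (T : Set (Sym2 V))).Walk a b} (hp : p.IsPath)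
    {g : Sym2 V} (hg : g ∈ p.edges) : w g < w s(a,b) := by
  classical
  have hgT : g ∈ T := by
    have h1 := p.edges_subset_edgeSet hg
    rw [edgeSet_fromEdgeSet] at h1
    exact Finset.mem_coe.mp h1.1
  have hgf : g ≠ s(a,b) := fun h => hfT (h ▸ hgT)
  induction g using Sym2.ind with
  | _ c d =>
  set T₂ : Finset (Sym2 V) := insert s(a,b) (T.erase s(c,d)) with hT₂
  have hsub2 : (T₂ : Set (Sym2 V)) ⊆ G.edgeSet := by
    intro e he
    rw [Finset.mem_coe, hT₂, Finset.mem_insert] at he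
    rcases he with rfl | he
    · exact G.mem_edgeSet.mpr hf
    · exact hT.1.1 (Finset.mem_coe.mpr (Finset.erase_subset _ _ he))
  -- cycle in F + f through g
  set Fp := fromEdgeSet (↑(insert s(a,b) T) : Set (Sym2 V)) with hFp
  have hpe_sub : ∀ e ∈ p.edges, e ∈ Fp.edgeSet := by
    intro e hepe
    have h1 := p.edges_subset_edgeSet hepe
    rw [edgeSet_fromEdgeSet] at h1
    rw [hFp, edgeSet_fromEdgeSet]
    exact ⟨by simp only [Finset.coe_insert, Set.mem_insert_iff]; exact Or.inr h1.1, h1.2⟩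
  have hadj_ba : Fp.Adj b a := by
    rw [hFp, fromEdgeSet_adj]
    refine ⟨?_, hf.ne'⟩
    rw [Sym2.eq_swap]
    simp
  have hp' : (p.transfer Fp hpe_sub).IsPath := hp.transfer _
  have hfnotp : s(b,a) ∉ (p.transfer Fp hpe_sub).edges := by
    rw [Walk.edges_transfer, Sym2.eq_swap]
    intro hmem
    have h1 := p.edges_subset_edgeSet hmem
    rw [edgeSet_fromEdgeSet] at h1
    exact hfT (Finset.mem_coe.mp h1.1)
  have hcyc : (Walk.cons hadj_ba (p.transfer Fp hpe_sub)).IsCycle :=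
    Path.cons_isCycle ⟨p.transfer Fp hpe_sub, hp'⟩ hadj_ba hfnotp
  have hgmem : s(c,d) ∈ (Walk.cons hadj_ba (p.transfer Fp hpe_sub)).edges := by
    rw [Walk.edges_cons, Walk.edges_transfer]
    exact List.mem_cons_of_mem _ hg
  have hkey : (Fp \ fromEdgeSet {s(c,d)}).Reachable c d :=
    ((adj_and_reachable_delete_edges_iff_exists_cycle (G := Fp)).mpr
      ⟨b, _, hcyc, hgmem⟩).2
  have hle2 : Fp \ fromEdgeSet {s(c,d)} ≤ fromEdgeSet (↑T₂ : Set (Sym2 V)) := by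
    intro x y hxy
    rw [sdiff_adj, hFp, fromEdgeSet_adj, fromEdgeSet_adj] at hxy
    rw [fromEdgeSet_adj]
    obtain ⟨⟨hmem, hne⟩, hnot⟩ := hxy
    have hxs : s(x,y) ≠ s(c,d) := fun hh => hnot ⟨by simp [hh], hne⟩
    rw [Finset.coe_insert, Set.mem_insert_iff, Finset.mem_coe] at hmem
    refine ⟨?_, hne⟩
    rw [Finset.mem_coe, hT₂, Finset.mem_insert]
    rcases hmem with hh | h2
    · exact Or.inl hh
    · exact Or.inr (Finset.mem_erase.mpr ⟨hxs, h2⟩)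
  have hacyF : (fromEdgeSet (↑T : Set (Sym2 V))).IsAcyclic := hT.1.2.1
  have hacy2 : (fromEdgeSet (↑T₂ : Set (Sym2 V))).IsAcyclic := by
    intro x cw hcw
    by_cases hfc : s(a,b) ∈ cw.edges
    · have hr := ((adj_and_reachable_delete_edges_iff_exists_cycle
        (G := fromEdgeSet (↑T₂ : Set (Sym2 V)))).mpr ⟨x, cw, hcw, hfc⟩).2
      set Fm := fromEdgeSet (↑(T.erase s(c,d)) : Set (Sym2 V)) with hFm
      have hle3 : fromEdgeSet (↑T₂ : Set (Sym2 V)) \ fromEdgeSet {s(a,b)} ≤ Fm := by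
        intro x' y' hxy
        rw [sdiff_adj, fromEdgeSet_adj, fromEdgeSet_adj] at hxy
        rw [hFm, fromEdgeSet_adj]
        obtain ⟨⟨hm, hnexy⟩, hnadj⟩ := hxy
        have hneab : s(x',y') ≠ s(a,b) := fun hh => hnadj ⟨by simp [hh], hnexy⟩
        rw [Finset.mem_coe, hT₂, Finset.mem_insert] at hm
        rcases hm with hh | hh
        · exact absurd hh hneab
        · exact ⟨Finset.mem_coe.mpr hh, hnexy⟩
      have hr' : Fm.Reachable a b := hr.mono hle3
      obtain ⟨q⟩ := hr'
      have hq_sub : ∀ e2 ∈ q.edges, e2 ∈ (fromEdgeSet (↑T : Set (Sym2 V))).edgeSet := by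
        intro e2 he2
        have h1 := q.edges_subset_edgeSet he2
        rw [hFm, edgeSet_fromEdgeSet] at h1
        rw [edgeSet_fromEdgeSet]
        exact ⟨Finset.mem_coe.mpr (Finset.mem_of_mem_erase (Finset.mem_coe.mp h1.1)), h1.2⟩
      have huniq := hacyF.path_unique ⟨p, hp⟩ (q.transfer (fromEdgeSet (↑T : Set (Sym2 V))) hq_sub).toPath
      have hgq : s(c,d) ∈ (q.transfer (fromEdgeSet (↑T : Set (Sym2 V))) hq_sub).edges := by
        have : ((⟨p, hp⟩ : (fromEdgeSet (↑T : Set (Sym2 V))).Path a b) : (fromEdgeSet (↑T : Set (Sym2 V))).Walk a b).edges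
            = ((q.transfer (fromEdgeSet (↑T : Set (Sym2 V))) hq_sub).toPath : (fromEdgeSet (↑T : Set (Sym2 V))).Walk a b).edges := by rw [huniq]
        exact Walk.edges_toPath_subset _ (by rw [← this]; exact hg)
      rw [Walk.edges_transfer] at hgq
      have h1 := q.edges_subset_edgeSet hgq
      rw [hFm, edgeSet_fromEdgeSet] at h1
      exact (Finset.mem_erase.mp (Finset.mem_coe.mp h1.1)).1 rfl
    · have hsub : ∀ e2 ∈ cw.edges, e2 ∈ (fromEdgeSet (↑T : Set (Sym2 V))).edgeSet := by
        intro e2 he2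
        have h1 := cw.edges_subset_edgeSet he2
        rw [edgeSet_fromEdgeSet] at h1
        rw [edgeSet_fromEdgeSet]
        refine ⟨?_, h1.2⟩
        have h3 : e2 ∈ T₂ := Finset.mem_coe.mp h1.1
        rw [hT₂, Finset.mem_insert] at h3
        rcases h3 with rfl | h4
        · exact absurd he2 hfc
        · exact Finset.mem_coe.mpr (Finset.mem_of_mem_erase h4)
      exact hacyF (cw.transfer (fromEdgeSet (↑T : Set (Sym2 V))) hsub) (hcw.transfer hsub)
  have hspan2 : ∀ x y, G.Reachable x y → (fromEdgeSet (↑T₂ : Set (Sym2 V))).Reachable x y := by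
    intro x y hxy
    refine reach_of_adj_reach ?_ (hT.1.2.2 x y hxy)
    intro x' y' hadj'
    rw [fromEdgeSet_adj] at hadj'
    obtain ⟨hmem', hne'⟩ := hadj'
    by_cases hgg : s(x', y') = s(c, d)
    · have hrcd : (fromEdgeSet (↑T₂ : Set (Sym2 V))).Reachable c d := hkey.mono hle2
      rw [Sym2.eq_iff] at hgg
      rcases hgg with ⟨rfl, rfl⟩ | ⟨rfl, rfl⟩
      · exact hrcd
      · exact hrcd.symm
    · refine Adj.reachable ?_
      rw [fromEdgeSet_adj]
      refine ⟨?_, hne'⟩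
      rw [Finset.mem_coe, hT₂, Finset.mem_insert]
      exact Or.inr (Finset.mem_erase.mpr ⟨hgg, Finset.mem_coe.mp hmem'⟩)
  have hsf2 : IsSpanningForest G T₂ := ⟨hsub2, hacy2, hspan2⟩
  have hmin := hT.2 T₂ hsf2
  have hfne : s(a,b) ∉ T.erase s(c,d) := fun h => hfT (Finset.erase_subset _ _ h)
  have hsum2 : ∑ e ∈ T₂, w e = w s(a,b) + (∑ e ∈ T, w e - w s(c,d)) := by
    rw [hT₂, Finset.sum_insert hfne, Finset.sum_erase_eq_sub hgT]
  rw [hsum2] at hmin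
  have hwle : w s(c,d) ≤ w s(a,b) := by linarith
  rcases hwle.lt_or_eq with h | h
  · exact h
  · exact absurd (hinj (edgeSet_mono le_top (hT.1.1 (Finset.mem_coe.mpr hgT)))
      (edgeSet_mono le_top (G.mem_edgeSet.mpr hf)) h) hgf

lemma msf_mem_sub {G H : SimpleGraph V} {w : Sym2 V → ℝ}
    (hinj : Set.InjOn w (⊤ : SimpleGraph V).edgeSet)
    (hHG : H ≤ G) {T TS : Finset (Sym2 V)}
    (hT : IsMSF G w T) (hTS : IsMSF H w TS)
    {e : Sym2 V} (heT : e ∈ T) (heH : e ∈ H.edgeSet) : e ∈ TS := by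
  classical
  revert heT heH
  induction e using Sym2.ind with
  | _ u v =>
  intro heT heH
  by_contra hnot
  have hadjH : H.Adj u v := H.mem_edgeSet.mp heH
  have hne : u ≠ v := hadjH.ne
  have hrS : (fromEdgeSet (↑TS : Set (Sym2 V))).Reachable u v := hTS.1.2.2 u v hadjH.reachable
  obtain ⟨p0⟩ := hrS
  have hX1 : ∀ g ∈ (p0.toPath : (fromEdgeSet (↑TS : Set (Sym2 V))).Walk u v).edges,
      w g < w s(u,v) :=
    fun g hg => msf_path_edge_lt hinj hTS hadjH hnot p0.toPath.2 hg
  have hadjF : (fromEdgeSet (↑T : Set (Sym2 V))).Adj u v := by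
    rw [fromEdgeSet_adj]; exact ⟨Finset.mem_coe.mpr heT, hne⟩
  have hacyF : (fromEdgeSet (↑T : Set (Sym2 V))).IsAcyclic := hT.1.2.1
  have hbridge : ¬(fromEdgeSet (↑T : Set (Sym2 V)) \ fromEdgeSet {s(u,v)}).Reachable u v :=
    (isBridge_iff.mp ((isAcyclic_iff_forall_adj_isBridge.mp hacyF) hadjF))
  obtain ⟨c, d, hcd, hFuc, hFud⟩ := exists_crossing
    (K := fromEdgeSet (↑T : Set (Sym2 V)) \ fromEdgeSet {s(u,v)})
    (p0.toPath : (fromEdgeSet (↑TS : Set (Sym2 V))).Walk u v) (Reachable.refl u) hbridge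
  have hwcd : w s(c,d) < w s(u,v) := hX1 _ hcd
  have hcd_TS : s(c,d) ∈ TS := by
    have h1 := Walk.edges_subset_edgeSet _ hcd
    rw [edgeSet_fromEdgeSet] at h1
    exact Finset.mem_coe.mp h1.1
  have hne_cd : c ≠ d := by
    intro h
    have h1 := Walk.edges_subset_edgeSet _ hcd
    rw [edgeSet_fromEdgeSet] at h1
    exact h1.2 (Sym2.mk_isDiag_iff.mpr h)
  have hcd_ne_uv : s(c,d) ≠ s(u,v) := fun h => hnot (h ▸ hcd_TS)
  have hcdH : s(c,d) ∈ H.edgeSet := hTS.1.1 (Finset.mem_coe.mpr hcd_TS)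
  have hcdG : s(c,d) ∈ G.edgeSet := edgeSet_mono hHG hcdH
  have hdsupp : d ∈ (p0.toPath : (fromEdgeSet (↑TS : Set (Sym2 V))).Walk u v).support :=
    Walk.snd_mem_support_of_mem_edges _ hcd
  have hFSud : (fromEdgeSet (↑TS : Set (Sym2 V))).Reachable u d :=
    ⟨(p0.toPath : (fromEdgeSet (↑TS : Set (Sym2 V))).Walk u v).takeUntil d hdsupp⟩
  have hFS_le_H : fromEdgeSet (↑TS : Set (Sym2 V)) ≤ H :=
    le_of_le_of_eq (fromEdgeSet_mono hTS.1.1) (fromEdgeSet_edgeSet H)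
  have hFud2 : (fromEdgeSet (↑T : Set (Sym2 V))).Reachable u d :=
    hT.1.2.2 u d ((hFSud.mono hFS_le_H).mono hHG)
  have hFvd : (fromEdgeSet (↑T : Set (Sym2 V)) \ fromEdgeSet {s(u,v)}).Reachable v d := by
    rcases reachable_split u v hFud2 with h1 | ⟨_, h2⟩ | ⟨h3, _⟩
    · exact absurd h1 hFud
    · exact h2
    · exact absurd h3 hbridge
  have hcdT : s(c,d) ∉ T := by
    intro hmem
    have hadj' : (fromEdgeSet (↑T : Set (Sym2 V)) \ fromEdgeSet {s(u,v)}).Adj c d := by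
      rw [sdiff_adj, fromEdgeSet_adj, fromEdgeSet_adj]
      exact ⟨⟨Finset.mem_coe.mpr hmem, hne_cd⟩, fun hcon => hcd_ne_uv hcon.1⟩
    exact hFud (hFuc.trans hadj'.reachable)
  set T₂ := insert s(c,d) (T.erase s(u,v)) with hT₂
  have hF'le : fromEdgeSet (↑T : Set (Sym2 V)) \ fromEdgeSet {s(u,v)} ≤
      fromEdgeSet (↑T₂ : Set (Sym2 V)) := by
    intro x y hxy
    rw [sdiff_adj, fromEdgeSet_adj, fromEdgeSet_adj] at hxy
    rw [fromEdgeSet_adj]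
    obtain ⟨⟨hm, hxyne⟩, hnadj⟩ := hxy
    have hneuv : s(x,y) ≠ s(u,v) := fun hh => hnadj ⟨hh, hxyne⟩
    refine ⟨?_, hxyne⟩
    rw [Finset.mem_coe, hT₂, Finset.mem_insert]
    exact Or.inr (Finset.mem_erase.mpr ⟨hneuv, Finset.mem_coe.mp hm⟩)
  have hrT2cd : (fromEdgeSet (↑T₂ : Set (Sym2 V))).Adj c d := by
    rw [fromEdgeSet_adj]
    exact ⟨Finset.mem_coe.mpr (Finset.mem_insert_self _ _), hne_cd⟩
  have hsub2 : (T₂ : Set (Sym2 V)) ⊆ G.edgeSet := by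
    intro e he
    rw [Finset.mem_coe, hT₂, Finset.mem_insert] at he
    rcases he with rfl | he
    · exact hcdG
    · exact hT.1.1 (Finset.mem_coe.mpr (Finset.erase_subset _ _ he))
  have hacy2 : (fromEdgeSet (↑T₂ : Set (Sym2 V))).IsAcyclic := by
    intro x cw hcw
    by_cases hgc : s(c,d) ∈ cw.edges
    · have hr := ((adj_and_reachable_delete_edges_iff_exists_cycle
        (G := fromEdgeSet (↑T₂ : Set (Sym2 V)))).mpr ⟨x, cw, hcw, hgc⟩).2
      have hle4 : fromEdgeSet (↑T₂ : Set (Sym2 V)) \ fromEdgeSet {s(c,d)} ≤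
          fromEdgeSet (↑T : Set (Sym2 V)) \ fromEdgeSet {s(u,v)} := by
        intro x' y' hxy
        rw [sdiff_adj, fromEdgeSet_adj, fromEdgeSet_adj] at hxy
        rw [sdiff_adj, fromEdgeSet_adj, fromEdgeSet_adj]
        obtain ⟨⟨hm, hnexy⟩, hnadj⟩ := hxy
        have hnecd : s(x',y') ≠ s(c,d) := fun hh => hnadj ⟨hh, hnexy⟩
        rw [Finset.mem_coe, hT₂, Finset.mem_insert] at hm
        rcases hm with hh | hh
        · exact absurd hh hnecd
        · exact ⟨⟨Finset.mem_coe.mpr (Finset.mem_of_mem_erase hh), hnexy⟩,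
            fun hcon => (Finset.mem_erase.mp hh).1 hcon.1⟩
      exact hFud (hFuc.trans (hr.mono hle4))
    · have hsub : ∀ e2 ∈ cw.edges, e2 ∈ (fromEdgeSet (↑T : Set (Sym2 V))).edgeSet := by
        intro e2 he2
        have h1 := cw.edges_subset_edgeSet he2
        rw [edgeSet_fromEdgeSet] at h1
        rw [edgeSet_fromEdgeSet]
        refine ⟨?_, h1.2⟩
        have h3 : e2 ∈ T₂ := Finset.mem_coe.mp h1.1
        rw [hT₂, Finset.mem_insert] at h3
        rcases h3 with rfl | h4
        · exact absurd he2 hgc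
        · exact Finset.mem_coe.mpr (Finset.mem_of_mem_erase h4)
      exact hacyF (cw.transfer (fromEdgeSet (↑T : Set (Sym2 V))) hsub) (hcw.transfer hsub)
  have hspan2 : ∀ x y, G.Reachable x y → (fromEdgeSet (↑T₂ : Set (Sym2 V))).Reachable x y := by
    intro x y hxy
    refine reach_of_adj_reach ?_ (hT.1.2.2 x y hxy)
    intro a' b' hadj'
    rw [fromEdgeSet_adj] at hadj'
    obtain ⟨hm, hne'⟩ := hadj'
    by_cases heq : s(a', b') = s(u, v)
    · have hruv : (fromEdgeSet (↑T₂ : Set (Sym2 V))).Reachable u v :=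
        ((hFuc.mono hF'le).trans hrT2cd.reachable).trans (hFvd.mono hF'le).symm
      rw [Sym2.eq_iff] at heq
      rcases heq with ⟨rfl, rfl⟩ | ⟨rfl, rfl⟩
      · exact hruv
      · exact hruv.symm
    · refine Adj.reachable ?_
      rw [fromEdgeSet_adj]
      refine ⟨?_, hne'⟩
      rw [Finset.mem_coe, hT₂, Finset.mem_insert]
      exact Or.inr (Finset.mem_erase.mpr ⟨heq, Finset.mem_coe.mp hm⟩)
  have hmin := hT.2 T₂ ⟨hsub2, hacy2, hspan2⟩
  have hcd_notin : s(c,d) ∉ T.erase s(u,v) := fun h => hcdT (Finset.erase_subset _ _ h)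
  have hsum : ∑ e ∈ T₂, w e = w s(c,d) + (∑ e ∈ T, w e - w s(u,v)) := by
    rw [hT₂, Finset.sum_insert hcd_notin, Finset.sum_erase_eq_sub heT]
  rw [hsum] at hmin
  linarith

lemma walk_in_S {H : SimpleGraph V} {SS : Set V}
    (hH : ∀ a b : V, H.Adj a b → a ∈ SS ∧ b ∈ SS) {x y : V} (p : H.Walk x y) (hx : x ∈ SS) :
    ∃ hy : y ∈ SS, (SimpleGraph.induce SS H).Reachable ⟨x, hx⟩ ⟨y, hy⟩ := by
  revert hx
  induction p with
  | nil => exact fun hx => ⟨hx, Reachable.refl _⟩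
  | @cons x z y ha p ih =>
    intro hx
    have hz := (hH _ _ ha).2
    obtain ⟨hy, hr⟩ := ih hz
    exact ⟨hy, Reachable.trans (Adj.reachable (by exact ha)) hr⟩

lemma cc_card_confined [Fintype V] {H : SimpleGraph V} {S : Finset V}
    (hprop : ∀ a b : V, H.Adj a b → a ∈ S ∧ b ∈ S) :
    Nat.card H.ConnectedComponent
      = Nat.card (SimpleGraph.induce (↑S : Set V) H).ConnectedComponent
        + (Fintype.card V - S.card) := by
  classical
  have hpropS : ∀ a b : V, H.Adj a b → a ∈ (↑S : Set V) ∧ b ∈ (↑S : Set V) := by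
    intro a b hab
    exact ⟨Finset.mem_coe.mpr (hprop a b hab).1, Finset.mem_coe.mpr (hprop a b hab).2⟩
  set Φ : (SimpleGraph.induce (↑S : Set V) H).ConnectedComponent ⊕ {v : V // v ∉ S} →
      H.ConnectedComponent :=
    Sum.elim (ConnectedComponent.map (SimpleGraph.Embedding.induce (↑S : Set V)).toHom)
      (fun v => H.connectedComponentMk v.1) with hΦ
  have hbij : Function.Bijective Φ := by
    constructor
    · rintro (c1 | ⟨v1, hv1⟩) (c2 | ⟨v2, hv2⟩) h
      · obtain ⟨⟨x, hx⟩, rfl⟩ := c1.exists_rep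
        obtain ⟨⟨y, hy⟩, rfl⟩ := c2.exists_rep
        simp only [hΦ, Sum.elim_inl, ConnectedComponent.map_mk] at h
        have hr : H.Reachable x y := ConnectedComponent.exact h
        obtain ⟨p⟩ := hr
        obtain ⟨hy', hrr⟩ := walk_in_S hpropS p hx
        exact congrArg Sum.inl (ConnectedComponent.sound hrr)
      · obtain ⟨⟨x, hx⟩, rfl⟩ := c1.exists_rep
        simp only [hΦ, Sum.elim_inl, Sum.elim_inr, ConnectedComponent.map_mk] at h
        have hr : H.Reachable x v2 := ConnectedComponent.exact h
        obtain ⟨p⟩ := hr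
        obtain ⟨hy', -⟩ := walk_in_S hpropS p hx
        exact absurd (Finset.mem_coe.mp hy') hv2
      · obtain ⟨⟨y, hy⟩, rfl⟩ := c2.exists_rep
        simp only [hΦ, Sum.elim_inl, Sum.elim_inr, ConnectedComponent.map_mk] at h
        have hr : H.Reachable y v1 := (ConnectedComponent.exact h).symm
        obtain ⟨p⟩ := hr
        obtain ⟨hy', -⟩ := walk_in_S hpropS p hy
        exact absurd (Finset.mem_coe.mp hy') hv1
      · simp only [hΦ, Sum.elim_inr] at h
        have hr : H.Reachable v1 v2 := ConnectedComponent.exact h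
        obtain ⟨p⟩ := hr
        cases p with
        | nil => rfl
        | cons ha p => exact absurd (hprop _ _ ha).1 hv1
    · intro c
      refine ConnectedComponent.ind (fun x => ?_) c
      by_cases hx : x ∈ S
      · refine ⟨Sum.inl ((SimpleGraph.induce (↑S : Set V) H).connectedComponentMk
          ⟨x, Finset.mem_coe.mpr hx⟩), ?_⟩
        simp only [hΦ, Sum.elim_inl, ConnectedComponent.map_mk]
        rfl
      · exact ⟨Sum.inr ⟨x, hx⟩, rfl⟩
  have hcard := Nat.card_eq_of_bijective Φ hbij
  rw [Nat.card_sum] at hcard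
  have hcompl : Nat.card {v : V // v ∉ S} = Fintype.card V - S.card := by
    rw [Nat.card_eq_fintype_card, Fintype.card_subtype_compl]
    congr 1
    exact Fintype.card_coe S
  omega

lemma cc_within [Fintype V] [DecidableEq V] (E' : Finset (Sym2 V)) (S : Finset V) :
    Nat.card (fromEdgeSet (edgesWithin E' S)).ConnectedComponent
      = Nat.card (SimpleGraph.induce (↑S : Set V)
          (fromEdgeSet (↑E' : Set (Sym2 V)))).ConnectedComponent
        + (Fintype.card V - S.card) := by
  classical
  have hprop : ∀ a b : V, (fromEdgeSet (edgesWithin E' S)).Adj a b → a ∈ S ∧ b ∈ S := by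
    intro a b hab
    rw [fromEdgeSet_adj] at hab
    obtain ⟨⟨hE, hin⟩, hne⟩ := hab
    exact ⟨hin a (Sym2.mem_mk_left a b), hin b (Sym2.mem_mk_right a b)⟩
  have heq : SimpleGraph.induce (↑S : Set V) (fromEdgeSet (edgesWithin E' S))
      = SimpleGraph.induce (↑S : Set V) (fromEdgeSet (↑E' : Set (Sym2 V))) := by
    ext ⟨a, ha⟩ ⟨b, hb⟩
    simp only [comap_adj, Function.Embedding.coe_subtype, fromEdgeSet_adj]
    constructor
    · rintro ⟨⟨h1, h2⟩, h3⟩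
      exact ⟨h1, h3⟩
    · rintro ⟨h1, h3⟩
      refine ⟨⟨h1, ?_⟩, h3⟩
      intro z hz
      rcases Sym2.mem_iff.mp hz with rfl | rfl
      · exact Finset.mem_coe.mp ha
      · exact Finset.mem_coe.mp hb
  rw [cc_card_confined hprop, heq]

open Finset in
lemma count_sets [Fintype V] [DecidableEq V] {a b : V} (hab : a ≠ b) {n : ℕ} (hn : 2 ≤ n) :
    ((Finset.univ.powersetCard n).filter (fun S : Finset V => a ∈ S ∧ b ∈ S)).card
      = (Fintype.card V - 2).choose (n - 2) := by
  classical
  have hpair : ({a, b} : Finset V).card = 2 := by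
    rw [card_insert_of_notMem (by simpa using hab), card_singleton]
  have htarget : (Finset.powersetCard (n-2) ({a, b}ᶜ : Finset V)).card
      = (Fintype.card V - 2).choose (n - 2) := by
    rw [card_powersetCard, card_compl, hpair]
  rw [← htarget]
  refine Finset.card_bij' (fun S _ => S \ {a, b}) (fun A _ => A ∪ {a, b}) ?_ ?_ ?_ ?_
  · intro S hS
    rw [mem_filter, mem_powersetCard] at hS
    obtain ⟨⟨-, hcard⟩, haS, hbS⟩ := hS
    have hsub : ({a, b} : Finset V) ⊆ S := by
      intro z hz; rcases mem_insert.mp hz with rfl | hz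
      · exact haS
      · exact (mem_singleton.mp hz) ▸ hbS
    rw [mem_powersetCard]
    constructor
    · intro z hz
      rw [mem_compl]
      exact (mem_sdiff.mp hz).2
    · rw [card_sdiff_of_subset hsub, hcard, hpair]
  · intro A hA
    rw [mem_powersetCard] at hA
    obtain ⟨hsubA, hcardA⟩ := hA
    have hdisj : Disjoint A ({a, b} : Finset V) := by
      rw [Finset.disjoint_left]
      intro z hz hz2
      exact (mem_compl.mp (hsubA hz)) hz2
    rw [mem_filter, mem_powersetCard]
    refine ⟨⟨subset_univ _, ?_⟩, ?_, ?_⟩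
    · rw [card_union_of_disjoint hdisj, hcardA, hpair]
      omega
    · exact mem_union_right _ (mem_insert_self _ _)
    · exact mem_union_right _ (mem_insert_of_mem (mem_singleton_self _))
  · intro S hS
    rw [mem_filter, mem_powersetCard] at hS
    obtain ⟨⟨-, hcard⟩, haS, hbS⟩ := hS
    apply sdiff_union_of_subset
    intro z hz; rcases mem_insert.mp hz with rfl | hz
    · exact haS
    · exact (mem_singleton.mp hz) ▸ hbS
  · intro A hA
    rw [mem_powersetCard] at hA
    apply union_sdiff_cancel_right
    rw [Finset.disjoint_left]
    intro z hz hz2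
    exact (mem_compl.mp (hA.1 hz)) hz2

open Finset in
lemma sum_count [Fintype V] [DecidableEq V] (T : Finset (Sym2 V))
    (hT : ∀ e ∈ T, ¬ e.IsDiag) {n : ℕ} (hn : 2 ≤ n) :
    ∑ S ∈ Finset.univ.powersetCard n,
        (T.filter (fun e => ∀ x ∈ e, x ∈ S)).card
      = T.card * (Fintype.card V - 2).choose (n - 2) := by
  classical
  simp only [Finset.card_filter]
  rw [Finset.sum_comm]
  have hper : ∀ e ∈ T, (∑ S ∈ Finset.univ.powersetCard n, if ∀ x ∈ e, x ∈ S then 1 else 0)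
      = (Fintype.card V - 2).choose (n - 2) := by
    intro e he
    obtain ⟨a, b, rfl⟩ : ∃ a b, s(a, b) = e := Sym2.ind (fun a b _ => ⟨a, b, rfl⟩) e he
    have hab : a ≠ b := fun h => hT _ he (Sym2.mk_isDiag_iff.mpr h)
    have hcond : ∀ S : Finset V, (∀ x ∈ s(a, b), x ∈ S) ↔ (a ∈ S ∧ b ∈ S) := by
      intro S
      constructor
      · intro h
        exact ⟨h a (Sym2.mem_mk_left a b), h b (Sym2.mem_mk_right a b)⟩
      · rintro ⟨h1, h2⟩ z hz
        rcases Sym2.mem_iff.mp hz with rfl | rfl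
        · exact h1
        · exact h2
    calc ∑ S ∈ Finset.univ.powersetCard n, (if ∀ x ∈ s(a,b), x ∈ S then 1 else 0)
        = ∑ S ∈ Finset.univ.powersetCard n, (if a ∈ S ∧ b ∈ S then 1 else 0) := by
          apply Finset.sum_congr rfl
          intro S _
          simp only [hcond S]
      _ = ((Finset.univ.powersetCard n).filter (fun S : Finset V => a ∈ S ∧ b ∈ S)).card := by
          rw [Finset.card_filter]
      _ = (Fintype.card V - 2).choose (n - 2) := count_sets hab hn
  rw [Finset.sum_congr rfl hper, Finset.sum_const, smul_eq_mul]

lemma mu_sum_one (p : ℝ) (A : Finset (Sym2 V)) :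
    ∑ E' ∈ A.powerset, p ^ E'.card * (1 - p) ^ (A.card - E'.card) = 1 := by
  rw [Finset.sum_pow_mul_eq_add_pow]
  norm_num

lemma choose_identity {n N : ℕ} (hn : 2 ≤ n) (hnN : n ≤ N) :
    N * (N - 1) * ((N - 2).choose (n - 2)) = n * (n - 1) * N.choose n := by
  obtain ⟨m, rfl⟩ : ∃ m, n = m + 2 := ⟨n - 2, by omega⟩
  obtain ⟨P, rfl⟩ : ∃ P, N = P + 2 := ⟨N - 2, by omega⟩
  have h2 : (P + 1) * P.choose m = (P + 1).choose (m + 1) * (m + 1) := Nat.add_one_mul_choose_eq P m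
  have h1 : (P + 2) * (P + 1).choose (m + 1) = (P + 2).choose (m + 2) * (m + 2) :=
    Nat.add_one_mul_choose_eq (P + 1) (m + 1)
  show (P + 2) * (P + 1) * (P.choose m) = (m + 2) * (m + 1) * ((P + 2).choose (m + 2))
  calc (P + 2) * (P + 1) * (P.choose m)
      = (P + 2) * ((P + 1) * P.choose m) := by ring
    _ = (P + 2) * ((P + 1).choose (m + 1) * (m + 1)) := by rw [h2]
    _ = (m + 1) * ((P + 2) * (P + 1).choose (m + 1)) := by ring
    _ = (m + 1) * ((P + 2).choose (m + 2) * (m + 2)) := by rw [h1]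
    _ = (m + 2) * (m + 1) * ((P + 2).choose (m + 2)) := by ring

end GnpPpvHelpers

open SimpleGraph in
set_option maxHeartbeats 1000000 in
/-- Let `G` be the complete graph on `N` vertices with distinct positive edge weights and
`2 ≤ n ≤ N`, `p ∈ (0,1]`.  Each edge is kept independently with probability `p`, giving a
random edge set `E'`; `T' E'` and `K'` denote the MSF and the number of connected
components of `G' = (V, E')`.  Independently, `S` is a uniformly random `n`-subset of
the vertices; `TS E' S` and `K'_S` denote the MSF and the number of connected components
of the subgraph of `G'` induced by `S`.  For an edge `e` uniform on `E` and independent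
of `(E', S)`,
`P(e ∈ T' ∣ e ∈ T'_S) = n(n-1)/(N(N-1)) · (N - E K')/(n - E K'_S)`,
where all probabilities/expectations (here written out as weighted sums over all
configurations of `E'` and `S`) are over the joint distribution of `E'`, `S` and `e`. -/
theorem gnp_ppv {V : Type*} [Fintype V] [DecidableEq V]
    (w : Sym2 V → ℝ) (N n : ℕ) (p : ℝ)
    (hN : Fintype.card V = N) (hn : 2 ≤ n) (hnN : n ≤ N)
    (hp0 : 0 < p) (hp1 : p ≤ 1)
    (hpos : ∀ e ∈ (⊤ : SimpleGraph V).edgeSet, 0 < w e)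
    (hinj : Set.InjOn w (⊤ : SimpleGraph V).edgeSet)
    (T' : Finset (Sym2 V) → Finset (Sym2 V))
    (hT' : ∀ E' ∈ (⊤ : SimpleGraph V).edgeFinset.powerset,
      IsMSF (SimpleGraph.fromEdgeSet (E' : Set (Sym2 V))) w (T' E'))
    (TS : Finset (Sym2 V) → Finset V → Finset (Sym2 V))
    (hTS : ∀ E' ∈ (⊤ : SimpleGraph V).edgeFinset.powerset,
      ∀ S ∈ Finset.univ.powersetCard n,
        IsMSF (SimpleGraph.fromEdgeSet (edgesWithin E' S)) w (TS E' S))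
    -- the probability of each realization `E'` of the random edge set
    (μ : Finset (Sym2 V) → ℝ)
    (hμ : ∀ E', μ E' =
      p ^ E'.card * (1 - p) ^ ((⊤ : SimpleGraph V).edgeFinset.card - E'.card))
    -- `E(K')`: the expected number of connected components of `G'`
    (EK' : ℝ)
    (hEK' : EK' = ∑ E' ∈ (⊤ : SimpleGraph V).edgeFinset.powerset,
      μ E' * (Nat.card (SimpleGraph.fromEdgeSet (E' : Set (Sym2 V))).ConnectedComponent : ℝ))
    -- `E(K'_S)`: the expected number of connected components of the subgraph of `G'`
    -- induced by the uniformly random `n`-subset `S`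
    (EKS : ℝ)
    (hEKS : EKS = ∑ E' ∈ (⊤ : SimpleGraph V).edgeFinset.powerset,
      ∑ S ∈ Finset.powersetCard n (Finset.univ : Finset V),
        μ E' * (1 / (N.choose n : ℝ)) *
          (Nat.card (SimpleGraph.induce (↑S : Set V)
            (SimpleGraph.fromEdgeSet (E' : Set (Sym2 V)))).ConnectedComponent : ℝ))
    -- `P(e ∈ T' ∩ T'_S)` for `e` uniform on `E`, jointly with `E'` and `S`
    (Pnum : ℝ)
    (hPnum : Pnum = ∑ E' ∈ (⊤ : SimpleGraph V).edgeFinset.powerset,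
      ∑ S ∈ Finset.univ.powersetCard n,
        μ E' * (1 / (N.choose n : ℝ)) *
          (((T' E' ∩ TS E' S).card : ℝ) / ((⊤ : SimpleGraph V).edgeFinset.card : ℝ)))
    -- `P(e ∈ T'_S)` for `e` uniform on `E`, jointly with `E'` and `S`
    (Pden : ℝ)
    (hPden : Pden = ∑ E' ∈ (⊤ : SimpleGraph V).edgeFinset.powerset,
      ∑ S ∈ Finset.univ.powersetCard n,
        μ E' * (1 / (N.choose n : ℝ)) *
          (((TS E' S).card : ℝ) / ((⊤ : SimpleGraph V).edgeFinset.card : ℝ))) :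
    Pnum / Pden =
      ((n : ℝ) * ((n : ℝ) - 1)) / ((N : ℝ) * ((N : ℝ) - 1)) *
        (((N : ℝ) - EK') / ((n : ℝ) - EKS)) := by
  classical
  set A := (⊤ : SimpleGraph V).edgeFinset with hA
  have hN2 : 2 ≤ N := le_trans hn hnN
  have hM : A.card = N.choose 2 := by
    rw [hA, card_edgeFinset_top_eq_card_choose_two, hN]
  have hMpos : 0 < A.card := by rw [hM]; exact Nat.choose_pos hN2
  have hMne : ((A.card : ℝ)) ≠ 0 := Nat.cast_ne_zero.mpr (by omega)
  have hCpos : 0 < N.choose n := Nat.choose_pos hnN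
  have hCne : ((N.choose n : ℝ)) ≠ 0 := Nat.cast_ne_zero.mpr (by omega)
  have hμsum : ∑ E' ∈ A.powerset, μ E' = 1 := by
    rw [Finset.sum_congr rfl (fun E' _ => hμ E')]
    exact mu_sum_one p A
  have hTcard : ∀ E' ∈ A.powerset, ((T' E').card : ℝ)
      = (N : ℝ) - (Nat.card (fromEdgeSet (E' : Set (Sym2 V))).ConnectedComponent : ℝ) := by
    intro E' hE'
    have h := spanningForest_card (hT' E' hE').1
    rw [hN] at h
    have h2 : (((T' E').card : ℝ))
        + (Nat.card (fromEdgeSet (E' : Set (Sym2 V))).ConnectedComponent : ℝ) = (N : ℝ) := by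
      exact_mod_cast congrArg (Nat.cast : ℕ → ℝ) h
    linarith
  have hTScard : ∀ E' ∈ A.powerset, ∀ S ∈ Finset.univ.powersetCard n, ((TS E' S).card : ℝ)
      = (n : ℝ) - (Nat.card (SimpleGraph.induce (↑S : Set V)
          (fromEdgeSet (E' : Set (Sym2 V)))).ConnectedComponent : ℝ) := by
    intro E' hE' S hS
    have h := spanningForest_card (hTS E' hE' S hS).1
    rw [cc_within, hN, (Finset.mem_powersetCard.mp hS).2] at h
    have h2 : (TS E' S).card + Nat.card (SimpleGraph.induce (↑S : Set V)
        (fromEdgeSet (E' : Set (Sym2 V)))).ConnectedComponent = n := by omega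
    have h3 : (((TS E' S).card : ℝ)) + (Nat.card (SimpleGraph.induce (↑S : Set V)
        (fromEdgeSet (E' : Set (Sym2 V)))).ConnectedComponent : ℝ) = (n : ℝ) := by
      exact_mod_cast congrArg (Nat.cast : ℕ → ℝ) h2
    linarith
  have hinter : ∀ E' ∈ A.powerset, ∀ S ∈ Finset.univ.powersetCard n,
      T' E' ∩ TS E' S = (T' E').filter (fun e => ∀ x ∈ e, x ∈ S) := by
    intro E' hE' S hS
    ext e
    simp only [Finset.mem_inter, Finset.mem_filter]
    constructor
    · rintro ⟨h1, h2⟩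
      refine ⟨h1, ?_⟩
      have h3 := (hTS E' hE' S hS).1.1 (Finset.mem_coe.mpr h2)
      rw [edgeSet_fromEdgeSet] at h3
      exact fun x hx => h3.1.2 x hx
    · rintro ⟨h1, h2⟩
      refine ⟨h1, ?_⟩
      have hG := (hT' E' hE').1.1 (Finset.mem_coe.mpr h1)
      rw [edgeSet_fromEdgeSet] at hG
      refine msf_mem_sub hinj (fromEdgeSet_mono (fun e' he' => he'.1))
        (hT' E' hE') (hTS E' hE' S hS) h1 ?_
      rw [edgeSet_fromEdgeSet]
      exact ⟨⟨hG.1, h2⟩, hG.2⟩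
  have hsumS : ∀ E' ∈ A.powerset,
      ∑ S ∈ Finset.univ.powersetCard n, (T' E' ∩ TS E' S).card
        = (T' E').card * (N - 2).choose (n - 2) := by
    intro E' hE'
    rw [Finset.sum_congr rfl (fun S hS => by rw [hinter E' hE' S hS])]
    have hdiag : ∀ e ∈ T' E', ¬e.IsDiag := by
      intro e heT
      have hG := (hT' E' hE').1.1 (Finset.mem_coe.mpr heT)
      rw [edgeSet_fromEdgeSet] at hG
      exact hG.2
    rw [sum_count (T' E') hdiag hn, hN]
  have hPnum' : Pnum = ((N - 2).choose (n - 2) : ℝ) / ((N.choose n : ℝ) * (A.card : ℝ))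
      * ((N : ℝ) - EK') := by
    rw [hPnum]
    have step1 : ∀ E' ∈ A.powerset,
        (∑ S ∈ Finset.univ.powersetCard n, μ E' * (1 / (N.choose n : ℝ)) *
          (((T' E' ∩ TS E' S).card : ℝ) / ((A.card : ℝ))))
        = ((N - 2).choose (n - 2) : ℝ) / ((N.choose n : ℝ) * (A.card : ℝ))
            * (μ E' * ((N:ℝ) - (Nat.card (fromEdgeSet
                (E' : Set (Sym2 V))).ConnectedComponent : ℝ))) := by
      intro E' hE'
      have hc : ∀ S ∈ Finset.univ.powersetCard n,
          μ E' * (1 / (N.choose n : ℝ)) * (((T' E' ∩ TS E' S).card : ℝ) / (A.card : ℝ))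
          = (μ E' * (1 / (N.choose n : ℝ)) * (1 / (A.card : ℝ)))
              * ((T' E' ∩ TS E' S).card : ℝ) :=
        fun S _ => by ring
      rw [Finset.sum_congr rfl hc, ← Finset.mul_sum, ← Nat.cast_sum, hsumS E' hE']
      push_cast
      rw [hTcard E' hE']
      ring
    rw [Finset.sum_congr rfl step1, ← Finset.mul_sum]
    congr 1
    rw [hEK', Finset.sum_congr rfl (fun E' _ => mul_sub (μ E') ((N:ℝ)) _),
      Finset.sum_sub_distrib, ← Finset.sum_mul, hμsum, one_mul]
  have hcardS : (Finset.univ.powersetCard n : Finset (Finset V)).card = N.choose n := by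
    rw [Finset.card_powersetCard, Finset.card_univ, hN]
  have hPden' : Pden = ((n : ℝ) - EKS) / (A.card : ℝ) := by
    rw [hPden]
    have step1 : ∀ E' ∈ A.powerset,
        (∑ S ∈ ((Finset.univ : Finset V).powersetCard n), μ E' * (1 / (N.choose n : ℝ)) *
          (((TS E' S).card : ℝ) / (A.card : ℝ)))
        = ∑ S ∈ ((Finset.univ : Finset V).powersetCard n),
            (μ E' * (1 / (N.choose n : ℝ)) * (n : ℝ) / (A.card : ℝ)
             - μ E' * (1 / (N.choose n : ℝ)) * (Nat.card (SimpleGraph.induce (↑S : Set V)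
                  (fromEdgeSet (E' : Set (Sym2 V)))).ConnectedComponent : ℝ)
                / (A.card : ℝ)) := by
      intro E' hE'
      refine Finset.sum_congr rfl (fun S hS => ?_)
      rw [hTScard E' hE' S hS]
      ring
    rw [Finset.sum_congr rfl step1,
      Finset.sum_congr rfl (fun (E' : Finset (Sym2 V)) _ => Finset.sum_sub_distrib _ _),
      Finset.sum_sub_distrib]
    have hfirst : ∑ E' ∈ A.powerset, ∑ _S ∈ ((Finset.univ : Finset V).powersetCard n),
        μ E' * (1 / (N.choose n : ℝ)) * (n:ℝ) / (A.card : ℝ)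
        = (n : ℝ) / (A.card : ℝ) := by
      rw [Finset.sum_congr rfl
        (fun (E' : Finset (Sym2 V)) _ => Finset.sum_const
          (μ E' * (1 / (N.choose n : ℝ)) * (n:ℝ) / (A.card : ℝ)))]
      simp only [hcardS, nsmul_eq_mul]
      have hc2 : ∀ E' ∈ A.powerset, (N.choose n : ℝ) *
          (μ E' * (1 / (N.choose n : ℝ)) * (n:ℝ) / (A.card : ℝ))
          = μ E' * ((n:ℝ) / (A.card:ℝ)) := by
        intro E' _
        field_simp
      rw [Finset.sum_congr rfl hc2, ← Finset.sum_mul, hμsum, one_mul]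
    have hsecond : ∑ E' ∈ A.powerset, ∑ S ∈ ((Finset.univ : Finset V).powersetCard n),
        μ E' * (1 / (N.choose n : ℝ)) * (Nat.card (SimpleGraph.induce (↑S : Set V)
          (fromEdgeSet (E' : Set (Sym2 V)))).ConnectedComponent : ℝ) / (A.card : ℝ)
        = EKS / (A.card : ℝ) := by
      rw [hEKS, Finset.sum_div]
      refine Finset.sum_congr rfl (fun E' _ => ?_)
      rw [Finset.sum_div]
    rw [hfirst, hsecond]
    ring
  have hkey : ((N - 2).choose (n - 2) : ℝ) * ((N:ℝ) * ((N:ℝ) - 1))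
      = (n:ℝ) * ((n:ℝ) - 1) * (N.choose n : ℝ) := by
    have h := choose_identity hn hnN
    have hc : ((N * (N - 1) * ((N - 2).choose (n - 2)) : ℕ) : ℝ)
        = ((n * (n - 1) * N.choose n : ℕ) : ℝ) := by exact_mod_cast congrArg (Nat.cast : ℕ → ℝ) h
    push_cast [Nat.cast_sub (show 1 ≤ N by omega), Nat.cast_sub (show 1 ≤ n by omega)] at hc
    linarith
  by_cases hdeg : (n : ℝ) - EKS = 0
  · rw [hPden', hdeg]
    simp
  · have hNN : (N:ℝ) * ((N:ℝ) - 1) ≠ 0 := by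
      have h2 : (2:ℝ) ≤ (N:ℝ) := by exact_mod_cast hN2
      have : (N:ℝ) ≠ 0 := by linarith
      have : (N:ℝ) - 1 ≠ 0 := by intro hc; rw [sub_eq_zero] at hc; linarith
      exact mul_ne_zero (by linarith) this
    have hmain : Pnum / Pden = (((N - 2).choose (n - 2) : ℝ) / (N.choose n : ℝ))
        * (((N:ℝ) - EK') / ((n:ℝ) - EKS)) := by
      rw [hPnum', hPden']
      field_simp
    rw [hmain]
    congr 1
    rw [div_eq_div_iff hCne hNN]
    linarith [hkey]
end

section
/- Let G = (V,E) be a finite connected weighted undirected simple graph having more than one minimum spanning tree, and let A and B be two distinct minimum spanning trees of G. Then there exists a bijection g : A \ B → B \ A such that for every a ∈ A \ B: (i) w(a) = w(g(a)); (ii) a and g(a) both belong to a cycle C ⊆ B ∪ {a} in which a and g(a) have the maximum weight among all edges of C; and (iii) a and g(a) both belong to a cut D ⊆ E in which a and g(a) have the minimum weight among all edges of D. -/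
/-- `C` is (the edge set of) a cycle of `G`: the set of edges traversed by some closed
walk of `G` through distinct vertices. -/
def IsCycleEdgeSet {V : Type*} (G : SimpleGraph V) (C : Set (Sym2 V)) : Prop :=
  ∃ (v : V) (p : G.Walk v v), p.IsCycle ∧ C = {e | e ∈ p.edges}

/-- `D` is a cut of `G`: the set of edges of `G` having one endpoint in `V₁` and the
other in its complement, for some nonempty proper vertex set `V₁`. -/
def IsCutEdgeSet {V : Type*} (G : SimpleGraph V) (D : Set (Sym2 V)) : Prop :=
  ∃ V₁ : Set V, V₁.Nonempty ∧ V₁ᶜ.Nonempty ∧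
    D = {e ∈ G.edgeSet | ∃ u v : V, e = s(u, v) ∧ u ∈ V₁ ∧ v ∈ V₁ᶜ}

section MSTHelpers
open SimpleGraph Finset
set_option linter.unusedSectionVars false
set_option maxHeartbeats 1000000

/-- The exchange property shared by `a` and its partner. -/
def ExchProp {V : Type*} (G : SimpleGraph V) (w : Sym2 V → ℝ) (B : Finset (Sym2 V))
    (x y : Sym2 V) : Prop :=
  w x = w y ∧
  (∃ C : Set (Sym2 V), IsCycleEdgeSet G C ∧ C ⊆ (B : Set (Sym2 V)) ∪ {x} ∧
    x ∈ C ∧ y ∈ C ∧ ∀ c ∈ C, w c ≤ w x) ∧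
  (∃ D : Set (Sym2 V), IsCutEdgeSet G D ∧ x ∈ D ∧ y ∈ D ∧ ∀ d ∈ D, w x ≤ w d)


variable {V : Type*} [Fintype V] [DecidableEq V]

/-- abbreviation -/
noncomputable abbrev fE (S : Finset (Sym2 V)) : SimpleGraph V :=
  SimpleGraph.fromEdgeSet (S : Set (Sym2 V))

lemma fE_sdiff (S : Finset (Sym2 V)) (e : Sym2 V) :
    fE S \ SimpleGraph.fromEdgeSet {e} = fE (S.erase e) := by
  ext a b
  simp only [sdiff_adj, fromEdgeSet_adj, Set.mem_singleton_iff, Finset.coe_erase,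
    Set.mem_diff, Finset.mem_coe]
  constructor
  · rintro ⟨⟨h1, h2⟩, h3⟩
    exact ⟨⟨h1, fun h => h3 ⟨h, h2⟩⟩, h2⟩
  · rintro ⟨⟨h1, h4⟩, h2⟩
    exact ⟨⟨h1, h2⟩, fun h => h4 h.1⟩

lemma walk_cross {H : SimpleGraph V} {S : Set V} :
    ∀ {x y : V} (p : H.Walk x y), x ∈ S → y ∉ S →
      ∃ u v, s(u, v) ∈ p.edges ∧ u ∈ S ∧ v ∉ S := by
  intro x y p
  induction p with
  | nil => intro hx hy; exact absurd hx hy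
  | @cons x z y h q ih =>
    intro hx hy
    by_cases hz : z ∈ S
    · obtain ⟨u, v, he, hu, hv⟩ := ih hz hy
      exact ⟨u, v, by simp [he], hu, hv⟩
    · exact ⟨x, z, by simp, hx, hz⟩

lemma walk_reach_or {S : Finset (Sym2 V)} {u v : V} :
    ∀ {z t : V} (_ : (fE S).Walk z t), t = u ∨ t = v →
      (fE (S.erase s(u, v))).Reachable z u ∨ (fE (S.erase s(u, v))).Reachable z v := by
  intro z t p
  induction p with
  | nil =>
    rintro (rfl | rfl)
    · exact Or.inl (Reachable.refl _)
    · exact Or.inr (Reachable.refl _)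
  | @cons z z₁ t h q ih =>
    intro ht
    by_cases he : s(z, z₁) = s(u, v)
    · rw [Sym2.eq_iff] at he
      rcases he with ⟨rfl, rfl⟩ | ⟨rfl, rfl⟩
      · exact Or.inl (Reachable.refl _)
      · exact Or.inr (Reachable.refl _)
    · have hadj : (fE (S.erase s(u, v))).Adj z z₁ := by
        rw [fromEdgeSet_adj] at h ⊢
        refine ⟨?_, h.2⟩
        have : s(z, z₁) ∈ S.erase s(u, v) := Finset.mem_erase.mpr ⟨he, by simpa using h.1⟩
        exact Finset.mem_coe.mpr this
      rcases ih ht with h' | h'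
      · exact Or.inl (hadj.reachable.trans h')
      · exact Or.inr (hadj.reachable.trans h')

lemma reach_or_of_connected {S : Finset (Sym2 V)} (hc : (fE S).Connected) {u v : V} (z : V) :
    (fE (S.erase s(u, v))).Reachable z u ∨ (fE (S.erase s(u, v))).Reachable z v :=
  (hc.preconnected z u).elim fun p => walk_reach_or p (Or.inl rfl)

/-- connectivity of exchanged graph -/
lemma conn_aux {S : Finset (Sym2 V)} (hc : (fE S).Connected) {c : Sym2 V} {p q : V}
    (hcpq : c = s(p, q)) {e : Sym2 V}
    (h : (fE (insert e (S.erase c))).Reachable p q) :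
    (fE (insert e (S.erase c))).Connected := by
  have hmono : fE (S.erase c) ≤ fE (insert e (S.erase c)) :=
    fromEdgeSet_mono (by exact_mod_cast Finset.subset_insert _ _)
  have key : ∀ z : V, (fE (insert e (S.erase c))).Reachable z p := by
    intro z
    subst hcpq
    rcases reach_or_of_connected hc z with h' | h'
    · exact h'.mono hmono
    · exact (h'.mono hmono).trans h.symm
  have : Nonempty V := hc.nonempty
  exact ⟨fun z w => (key z).trans (key w).symm⟩

/-- acyclicity of exchanged graph -/
lemma acyclic_aux {S : Finset (Sym2 V)} (hac : (fE S).IsAcyclic) (c : Sym2 V) {e : Sym2 V}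
    {p q : V} (he : e = s(p, q)) (heS : e ∉ S.erase c)
    (hnr : ¬ (fE (S.erase c)).Reachable p q) :
    (fE (insert e (S.erase c))).IsAcyclic := by
  intro z W hW
  by_cases hmem : e ∈ W.edges
  · subst he
    have hreach : (fE (insert s(p,q) (S.erase c)) \ fromEdgeSet {s(p, q)}).Reachable p q :=
      (adj_and_reachable_delete_edges_iff_exists_cycle.mpr ⟨z, W, hW, hmem⟩).2
    rw [fE_sdiff, Finset.erase_insert heS] at hreach
    exact hnr hreach
  · have hedges : ∀ f ∈ W.edges, f ∈ (fE S).edgeSet := by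
      intro f hf
      have h1 : f ∈ (fE (insert e (S.erase c))).edgeSet := W.edges_subset_edgeSet hf
      rw [edgeSet_fromEdgeSet] at h1 ⊢
      refine ⟨?_, h1.2⟩
      have h2 : f ∈ insert e (S.erase c) := by
        have := h1.1; rwa [Finset.mem_coe] at this
      rcases Finset.mem_insert.mp h2 with rfl | h3
      · exact absurd hf hmem
      · exact Finset.mem_coe.mpr (Finset.mem_of_mem_erase h3)
    exact hac (W.transfer (fE S) hedges) (hW.transfer hedges)

lemma cover_of_connected {T : Finset (Sym2 V)} (h2 : 1 < Fintype.card V)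
    (hc : (fE T).Connected) : ∀ v : V, ∃ e ∈ T, v ∈ e := by
  intro v
  have : Nontrivial V := Fintype.one_lt_card_iff_nontrivial.mp h2
  obtain ⟨u, hu⟩ := exists_ne v
  obtain ⟨p⟩ := hc.preconnected v u
  cases p with
  | nil => exact absurd rfl hu.symm
  | @cons _ z _ h q =>
    rw [fromEdgeSet_adj] at h
    exact ⟨s(v, z), Finset.mem_coe.mp h.1, by simp⟩

lemma edgeSet_fE {G : SimpleGraph V} {T : Finset (Sym2 V)} (hT : (T : Set (Sym2 V)) ⊆ G.edgeSet) :
    (fE T).edgeSet = (T : Set (Sym2 V)) := by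
  rw [edgeSet_fromEdgeSet]
  ext f
  simp only [Set.mem_diff, Set.mem_setOf_eq, Finset.mem_coe, and_iff_left_iff_imp]
  exact fun hf => G.not_isDiag_of_mem_edgeSet (hT hf)

lemma card_of_spanning {G : SimpleGraph V} {T : Finset (Sym2 V)}
    (hT : (T : Set (Sym2 V)) ⊆ G.edgeSet) (hac : (fE T).IsAcyclic)
    (hc : (fE T).Connected) : T.card + 1 = Fintype.card V := by
  classical
  have hE : (fE T).edgeSet = (T : Set (Sym2 V)) := edgeSet_fE hT
  haveI : Fintype ((fE T).edgeSet) := by rw [hE]; exact FinsetCoe.fintype T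
  have h := IsTree.card_edgeFinset (G := fE T) ⟨hc, hac⟩
  rw [← h]
  congr 1
  rw [edgeFinset, Set.toFinset_congr hE, Finset.toFinset_coe]

lemma step {G : SimpleGraph V} (w : Sym2 V → ℝ)
    {A B : Finset (Sym2 V)} (hA : IsMST G w A) (hB : IsMST G w B)
    {a : Sym2 V} (haA : a ∈ A) (haB : a ∉ B) :
    ∃ b ∈ B, b ∉ A ∧ IsMST G w (insert b (A.erase a)) ∧
      (w a = w b ∧
       (∃ C : Set (Sym2 V), IsCycleEdgeSet G C ∧ C ⊆ ↑B ∪ {a} ∧ a ∈ C ∧ b ∈ C ∧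
          ∀ c ∈ C, w c ≤ w a) ∧
       (∃ D : Set (Sym2 V), IsCutEdgeSet G D ∧ a ∈ D ∧ b ∈ D ∧ ∀ d ∈ D, w a ≤ w d)) := by
  induction a using Sym2.ind with
  | _ u v =>
  obtain ⟨hAsub, _, hAac, hAconn⟩ := hA.1
  obtain ⟨hBsub, _, hBac, hBconn⟩ := hB.1
  have hadj : G.Adj u v := (G.mem_edgeSet).mp (hAsub (Finset.mem_coe.mpr haA))
  have huv : u ≠ v := hadj.ne
  have hcard2 : 1 < Fintype.card V := Fintype.one_lt_card_iff_nontrivial.mpr ⟨u, v, huv⟩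
  set V₁ : Set V := {z | (fE (A.erase s(u, v))).Reachable z u} with hV₁
  have hu : u ∈ V₁ := Reachable.refl u
  have hv : v ∉ V₁ := by
    intro hr
    have hadjA : (fE A).Adj u v := (fromEdgeSet_adj _).mpr ⟨Finset.mem_coe.mpr haA, huv⟩
    have hreach : (fE A \ fromEdgeSet {s(u, v)}).Reachable u v := by
      rw [fE_sdiff]; exact hr.symm
    obtain ⟨z, W, hW, _⟩ := adj_and_reachable_delete_edges_iff_exists_cycle.mp ⟨hadjA, hreach⟩
    exact hAac W hW
  have reachv : ∀ z, z ∉ V₁ → (fE (A.erase s(u, v))).Reachable z v := fun z hz =>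
    (reach_or_of_connected hAconn z).resolve_left hz
  have hcross : ∀ {x y : V}, x ∈ V₁ → y ∉ V₁ → s(x, y) ∉ A.erase s(u, v) := by
    intro x y hx hy hmem
    have hne : x ≠ y := by rintro rfl; exact hy hx
    have hadj' : (fE (A.erase s(u, v))).Adj x y :=
      (fromEdgeSet_adj _).mpr ⟨Finset.mem_coe.mpr hmem, hne⟩
    exact hy (hadj'.symm.reachable.trans hx)
  set D : Set (Sym2 V) := {e ∈ G.edgeSet | ∃ x y : V, e = s(x, y) ∧ x ∈ V₁ ∧ y ∈ V₁ᶜ} with hD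
  have hDcut : IsCutEdgeSet G D := ⟨V₁, ⟨u, hu⟩, ⟨v, hv⟩, rfl⟩
  have haD : s(u, v) ∈ D := ⟨hadj, u, v, rfl, hu, hv⟩
  -- cut exchange spanning trees
  have hST : ∀ d ∈ D, IsSpanningTree G (insert d (A.erase s(u, v))) := by
    rintro d ⟨hdE, x, y, rfl, hx, hy⟩
    have hne : x ≠ y := by rintro rfl; exact hy hx
    have hnotin : s(x, y) ∉ A.erase s(u, v) := hcross hx hy
    have hmono : fE (A.erase s(u, v)) ≤ fE (insert s(x, y) (A.erase s(u, v))) :=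
      fromEdgeSet_mono (by exact_mod_cast Finset.subset_insert _ _)
    have r2 : (fE (insert s(x, y) (A.erase s(u, v)))).Adj x y :=
      (fromEdgeSet_adj _).mpr ⟨Finset.mem_coe.mpr (Finset.mem_insert_self _ _), hne⟩
    have hreach : (fE (insert s(x, y) (A.erase s(u, v)))).Reachable u v :=
      ((hx.symm.mono hmono).trans (r2.reachable.trans ((reachv y hy).mono hmono)))
    have hconn := conn_aux hAconn (c := s(u, v)) rfl hreach
    refine ⟨?_, cover_of_connected hcard2 hconn, ?_, hconn⟩
    · rw [Finset.coe_insert]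
      exact Set.insert_subset hdE ((Finset.coe_subset.mpr (Finset.erase_subset _ _)).trans hAsub)
    · exact acyclic_aux hAac s(u, v) rfl hnotin (fun hr => hy (hr.symm.trans hx))
  -- sums after exchange on A
  have hsumA : ∀ d, d ∉ A.erase s(u, v) →
      ∑ e ∈ insert d (A.erase s(u, v)), w e = ∑ e ∈ A, w e - w s(u, v) + w d := by
    intro d hd
    rw [Finset.sum_insert hd]
    have := Finset.sum_erase_add A w haA
    linarith
  -- a is minimal in the cut D
  have hmin : ∀ d ∈ D, w s(u, v) ≤ w d := by
    intro d hd
    obtain ⟨hdE, x, y, rfl, hx, hy⟩ := hd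
    have hnotin : s(x, y) ∉ A.erase s(u, v) := hcross hx hy
    have h1 := hA.2 _ (hST _ ⟨hdE, x, y, rfl, hx, hy⟩)
    rw [hsumA _ hnotin] at h1
    linarith
  -- cycle construction
  obtain ⟨W0⟩ := hBconn.preconnected u v
  set Q := W0.toPath with hQdef
  have hQB : ∀ f ∈ Q.1.edges, f ∈ (B : Set (Sym2 V)) := by
    intro f hf
    have := Q.1.edges_subset_edgeSet hf
    rwa [edgeSet_fE hBsub] at this
  obtain ⟨x, y, hbe, hx, hy⟩ := walk_cross Q.1 hu hv
  have hbB : s(x, y) ∈ B := Finset.mem_coe.mp (hQB _ hbe)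
  have hbG : s(x, y) ∈ G.edgeSet := hBsub (hQB _ hbe)
  have hbD : s(x, y) ∈ D := ⟨hbG, x, y, rfl, hx, hy⟩
  have hba : s(x, y) ≠ s(u, v) := fun h => haB (h ▸ hbB)
  have hbA : s(x, y) ∉ A := fun h => (hcross hx hy) (Finset.mem_erase.mpr ⟨hba, h⟩)
  have hQG : ∀ f ∈ Q.1.edges, f ∈ G.edgeSet := fun f hf => hBsub (hQB f hf)
  set QG := Q.1.transfer G hQG with hQGdef
  set WG := SimpleGraph.Walk.cons hadj.symm QG with hWGdef
  have haQ : s(v, u) ∉ QG.edges := by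
    rw [hQGdef, SimpleGraph.Walk.edges_transfer]
    intro h
    exact haB (by rw [Sym2.eq_swap] at h; exact Finset.mem_coe.mp (hQB _ h))
  have hWGcyc : WG.IsCycle := (SimpleGraph.Walk.cons_isCycle_iff QG hadj.symm).mpr
    ⟨Q.2.transfer hQG, haQ⟩
  have hWGedges : WG.edges = s(v, u) :: Q.1.edges := by
    rw [hWGdef, SimpleGraph.Walk.edges_cons, hQGdef, SimpleGraph.Walk.edges_transfer]
  set C : Set (Sym2 V) := {e | e ∈ WG.edges} with hC
  have hCyc : IsCycleEdgeSet G C := ⟨v, WG, hWGcyc, rfl⟩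
  have haC : s(u, v) ∈ C := by
    show s(u, v) ∈ WG.edges
    rw [hWGedges, Sym2.eq_swap]
    exact List.mem_cons_self
  have hbC : s(x, y) ∈ C := by
    show s(x, y) ∈ WG.edges
    rw [hWGedges]
    exact List.mem_cons_of_mem _ hbe
  have hCsub : C ⊆ (B : Set (Sym2 V)) ∪ {s(u, v)} := by
    intro f hf
    have hf0 : f ∈ WG.edges := hf
    rw [hWGedges] at hf0
    rcases List.mem_cons.mp hf0 with rfl | hf'
    · exact Or.inr (by rw [Sym2.eq_swap]; rfl)
    · exact Or.inl (hQB _ hf')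
  -- maximality on the cycle
  have hmax : ∀ c ∈ C, w c ≤ w s(u, v) := by
    have key : ∀ c : Sym2 V, c ∈ Q.1.edges → c ∈ B → w c ≤ w s(u, v) := by
      refine fun c => Sym2.ind (fun p' q' hcQ hcB => ?_) c
      have hca : s(p', q') ≠ s(u, v) := fun h => haB (h ▸ hcB)
      have hauB : ((insert s(u, v) B : Finset (Sym2 V)) : Set (Sym2 V)) ⊆ G.edgeSet := by
        rw [Finset.coe_insert]
        exact Set.insert_subset hadj hBsub
      -- cycle in fE (insert a B) through c
      have hQB' : ∀ f ∈ Q.1.edges, f ∈ (fE (insert s(u, v) B)).edgeSet := by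
        intro f hf
        rw [edgeSet_fE hauB]
        exact Finset.mem_coe.mpr (Finset.mem_insert_of_mem (Finset.mem_coe.mp (hQB f hf)))
      set QB := Q.1.transfer _ hQB' with hQBdef
      have hadjB : (fE (insert s(u, v) B)).Adj v u := (fromEdgeSet_adj _).mpr
        ⟨by rw [Sym2.eq_swap]; exact Finset.mem_coe.mpr (Finset.mem_insert_self _ _), huv.symm⟩
      set WB := SimpleGraph.Walk.cons hadjB QB with hWBdef
      have hWBcyc : WB.IsCycle := (SimpleGraph.Walk.cons_isCycle_iff QB hadjB).mpr
        ⟨Q.2.transfer hQB', by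
          rw [hQBdef, SimpleGraph.Walk.edges_transfer]
          intro h
          exact haB (by rw [Sym2.eq_swap] at h; exact Finset.mem_coe.mp (hQB _ h))⟩
      have hcWB : s(p', q') ∈ WB.edges := by
        rw [hWBdef, SimpleGraph.Walk.edges_cons, hQBdef, SimpleGraph.Walk.edges_transfer]
        exact List.mem_cons_of_mem _ hcQ
      have hreach := (adj_and_reachable_delete_edges_iff_exists_cycle.mpr
        ⟨v, WB, hWBcyc, hcWB⟩).2
      change (fE (insert s(u, v) B) \ fromEdgeSet {s(p', q')}).Reachable p' q' at hreach
      rw [fE_sdiff, Finset.erase_insert_of_ne (fun h => hca h.symm)] at hreach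
      have hBconn' : (fE (insert s(u, v) B)).Connected :=
        hBconn.mono (fromEdgeSet_mono (by exact_mod_cast Finset.subset_insert _ _))
      have hconn := conn_aux hBconn (c := s(p', q')) rfl (e := s(u, v)) hreach
      -- acyclicity via path uniqueness in the tree fE B
      have hBerase_sub : ((B.erase s(p', q') : Finset (Sym2 V)) : Set (Sym2 V)) ⊆ G.edgeSet :=
        (Finset.coe_subset.mpr (Finset.erase_subset _ _)).trans hBsub
      have hnr : ¬ (fE (B.erase s(p', q'))).Reachable u v := by
        intro hr
        obtain ⟨R⟩ := hr
        have hRedges : ∀ f ∈ R.toPath.1.edges, f ∈ (fE B).edgeSet := by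
          intro f hf
          have h1 := R.toPath.1.edges_subset_edgeSet hf
          rw [edgeSet_fE hBerase_sub] at h1
          rw [edgeSet_fE hBsub]
          exact Finset.mem_coe.mpr (Finset.mem_of_mem_erase (Finset.mem_coe.mp h1))
        have htree : (fE B).IsTree := ⟨hBconn, hBac⟩
        have huniq := htree.existsUnique_path u v
        have heq : R.toPath.1.transfer (fE B) hRedges = Q.1 :=
          huniq.unique (R.toPath.2.transfer hRedges) Q.2
        have hcR : s(p', q') ∈ R.toPath.1.edges := by
          have : s(p', q') ∈ (R.toPath.1.transfer (fE B) hRedges).edges := by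
            rw [heq]; exact hcQ
          rwa [SimpleGraph.Walk.edges_transfer] at this
        have := R.toPath.1.edges_subset_edgeSet hcR
        rw [edgeSet_fE hBerase_sub] at this
        exact Finset.notMem_erase _ _ (Finset.mem_coe.mp this)
      have hacy := acyclic_aux hBac s(p', q') (e := s(u, v)) rfl
        (fun h => haB (Finset.mem_of_mem_erase h)) hnr
      have hBsub' : ((insert s(u, v) (B.erase s(p', q')) : Finset (Sym2 V)) : Set (Sym2 V))
          ⊆ G.edgeSet := by
        rw [Finset.coe_insert]
        exact Set.insert_subset hadj hBerase_sub
      have hST' : IsSpanningTree G (insert s(u, v) (B.erase s(p', q'))) :=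
        ⟨hBsub', cover_of_connected hcard2 hconn, hacy, hconn⟩
      have h1 := hB.2 _ hST'
      have hnotin : s(u, v) ∉ B.erase s(p', q') := fun h => haB (Finset.mem_of_mem_erase h)
      rw [Finset.sum_insert hnotin] at h1
      have h2 := Finset.sum_erase_add B w hcB
      linarith
    intro c hc
    have hc0 : c ∈ WG.edges := hc
    rw [hWGedges] at hc0
    rcases List.mem_cons.mp hc0 with rfl | hc'
    · rw [Sym2.eq_swap]
    · exact key c hc' (Finset.mem_coe.mp (hQB _ hc'))
  -- weight equality
  have hwab : w s(u, v) = w s(x, y) := le_antisymm (hmin _ hbD) (hmax _ hbC)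
  -- the exchanged tree is an MST
  have hAmst : IsMST G w (insert s(x, y) (A.erase s(u, v))) := by
    refine ⟨hST _ hbD, fun T' hT' => ?_⟩
    have h1 := hA.2 T' hT'
    rw [hsumA _ (hcross hx hy)]
    linarith
  exact ⟨s(x, y), hbB, hbA, hAmst, hwab, ⟨C, hCyc, hCsub, haC, hbC, hmax⟩,
    ⟨D, hDcut, haD, hbD, hmin⟩⟩

lemma extend_bij {α : Type*} [DecidableEq α] {s t : Finset α} {a b : α}
    (ha : a ∈ s) (hb : b ∈ t) {P : α → α → Prop} (hab : P a b)
    (g' : ↑(s.erase a) → ↑(t.erase b)) (hg' : Function.Bijective g')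
    (hP : ∀ x : ↑(s.erase a), P ↑x ↑(g' x)) :
    ∃ g : ↑s → ↑t, Function.Bijective g ∧ ∀ x : ↑s, P ↑x ↑(g x) := by
  refine ⟨fun x => if h : (x : α) = a then ⟨b, hb⟩ else
    ⟨(g' ⟨x, Finset.mem_erase.mpr ⟨h, x.2⟩⟩ : α),
      Finset.mem_of_mem_erase (g' ⟨x, Finset.mem_erase.mpr ⟨h, x.2⟩⟩).2⟩, ⟨?_, ?_⟩, ?_⟩
  · -- injective
    intro x₁ x₂ h
    by_cases h1 : (x₁ : α) = a <;> by_cases h2 : (x₂ : α) = a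
    · exact Subtype.ext (h1.trans h2.symm)
    · simp only [dif_pos h1, dif_neg h2] at h
      have := congrArg Subtype.val h
      exact absurd this.symm
        (Finset.mem_erase.mp (g' ⟨x₂, Finset.mem_erase.mpr ⟨h2, x₂.2⟩⟩).2).1
    · simp only [dif_neg h1, dif_pos h2] at h
      have := congrArg Subtype.val h
      exact absurd this (Finset.mem_erase.mp (g' ⟨x₁, Finset.mem_erase.mpr ⟨h1, x₁.2⟩⟩).2).1
    · simp only [dif_neg h1, dif_neg h2] at h
      have hval := congrArg Subtype.val h
      have heq : g' ⟨x₁, Finset.mem_erase.mpr ⟨h1, x₁.2⟩⟩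
          = g' ⟨x₂, Finset.mem_erase.mpr ⟨h2, x₂.2⟩⟩ := Subtype.ext hval
      have := congrArg Subtype.val (hg'.1 heq)
      exact Subtype.ext this
  · -- surjective
    intro y
    by_cases hy : (y : α) = b
    · exact ⟨⟨a, ha⟩, by simp only [dif_pos]; exact Subtype.ext hy.symm⟩
    · obtain ⟨X, hX⟩ := hg'.2 ⟨y, Finset.mem_erase.mpr ⟨hy, y.2⟩⟩
      have hXa : (X : α) ≠ a := (Finset.mem_erase.mp X.2).1
      refine ⟨⟨X, Finset.mem_of_mem_erase X.2⟩, ?_⟩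
      simp only [dif_neg hXa]
      have harg : (⟨(X : α), Finset.mem_erase.mpr ⟨hXa, Finset.mem_of_mem_erase X.2⟩⟩
          : ↑(s.erase a)) = X := Subtype.ext rfl
      apply Subtype.ext
      show (g' _ : α) = (y : α)
      rw [harg, hX]
  · -- property
    intro x
    by_cases h : (x : α) = a
    · simp only [dif_pos h, h]
      exact hab
    · simp only [dif_neg h]
      exact hP ⟨x, Finset.mem_erase.mpr ⟨h, x.2⟩⟩

lemma main_ind {G : SimpleGraph V} (w : Sym2 V → ℝ) {B : Finset (Sym2 V)}
    (hB : IsMST G w B) :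
    ∀ (n : ℕ) (A : Finset (Sym2 V)), IsMST G w A → (A \ B).card = n →
      ∃ g : ↑(A \ B) → ↑(B \ A), Function.Bijective g ∧
        ∀ x : ↑(A \ B), ExchProp G w B ↑x ↑(g x) := by
  intro n
  induction n with
  | zero =>
    intro A hA hcard
    have hsd : A \ B = ∅ := Finset.card_eq_zero.mp hcard
    have hsub : A ⊆ B := (Finset.sdiff_eq_empty_iff_subset).mp hsd
    have hcA := card_of_spanning hA.1.1 hA.1.2.2.1 hA.1.2.2.2
    have hcB := card_of_spanning hB.1.1 hB.1.2.2.1 hB.1.2.2.2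
    have hAB : A = B := Finset.eq_of_subset_of_card_le hsub (by omega)
    have hsd2 : B \ A = ∅ := by rw [hAB, Finset.sdiff_self]
    haveI : IsEmpty ↑(A \ B) := Finset.isEmpty_coe_sort.mpr hsd
    haveI : IsEmpty ↑(B \ A) := Finset.isEmpty_coe_sort.mpr hsd2
    exact ⟨fun x => isEmptyElim x, ⟨fun x₁ => isEmptyElim x₁, fun y => isEmptyElim y⟩,
      fun x => isEmptyElim x⟩
  | succ n ih =>
    intro A hA hcard
    have hpos : (A \ B).Nonempty := Finset.card_pos.mp (by omega)
    obtain ⟨a, haAB⟩ := hpos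
    obtain ⟨haA, haB⟩ := Finset.mem_sdiff.mp haAB
    obtain ⟨b, hbB, hbA, hmst, hw, hCy, hCu⟩ := step w hA hB haA haB
    have hE1 : insert b (A.erase a) \ B = (A \ B).erase a := by
      ext e
      simp only [Finset.mem_sdiff, Finset.mem_insert, Finset.mem_erase]
      constructor
      · rintro ⟨rfl | ⟨hne, heA⟩, heB⟩
        · exact absurd hbB heB
        · exact ⟨hne, heA, heB⟩
      · rintro ⟨hne, heA, heB⟩
        exact ⟨Or.inr ⟨hne, heA⟩, heB⟩
    have hE2 : B \ insert b (A.erase a) = (B \ A).erase b := by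
      ext e
      simp only [Finset.mem_sdiff, Finset.mem_insert, Finset.mem_erase, not_or, not_and]
      constructor
      · rintro ⟨heB, hnb, h2⟩
        refine ⟨hnb, heB, fun heA => ?_⟩
        rcases eq_or_ne e a with rfl | hne
        · exact haB heB
        · exact h2 hne heA
      · rintro ⟨hnb, heB, hnA⟩
        exact ⟨heB, hnb, fun _ h => hnA h⟩
    have hcard' : (insert b (A.erase a) \ B).card = n := by
      rw [hE1, Finset.card_erase_of_mem haAB, hcard]
      omega
    have IH := ih (insert b (A.erase a)) hmst hcard'
    rw [hE1, hE2] at IH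
    obtain ⟨g', hg'bij, hg'P⟩ := IH
    exact extend_bij haAB (Finset.mem_sdiff.mpr ⟨hbB, hbA⟩) ⟨hw, hCy, hCu⟩ g' hg'bij hg'P


end MSTHelpers

set_option maxHeartbeats 1000000 in
/-- If a finite connected weighted graph has two distinct MSTs `A` and `B`, then there is
a bijection `g : A \ B → B \ A` such that each `a` and `g a` have the same weight, lie
together on a cycle `C ⊆ B ∪ {a}` on which they have maximum weight, and lie together in
a cut `D ⊆ E` in which they have minimum weight. -/
theorem mst_exchange_bijection {V : Type*} [Fintype V] [DecidableEq V]
    (G : SimpleGraph V) (hG : G.Connected) (w : Sym2 V → ℝ)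
    (hpos : ∀ e ∈ G.edgeSet, 0 < w e)
    (A B : Finset (Sym2 V)) (hA : IsMST G w A) (hB : IsMST G w B) (hAB : A ≠ B) :
    ∃ g : ↑(A \ B : Finset (Sym2 V)) → ↑(B \ A : Finset (Sym2 V)),
      Function.Bijective g ∧
      ∀ a : ↑(A \ B : Finset (Sym2 V)),
        w (a : Sym2 V) = w ((g a : Sym2 V)) ∧
        (∃ C : Set (Sym2 V), IsCycleEdgeSet G C ∧
          C ⊆ (B : Set (Sym2 V)) ∪ {(a : Sym2 V)} ∧
          (a : Sym2 V) ∈ C ∧ ((g a : Sym2 V)) ∈ C ∧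
          ∀ c ∈ C, w c ≤ w (a : Sym2 V)) ∧
        (∃ D : Set (Sym2 V), IsCutEdgeSet G D ∧
          (a : Sym2 V) ∈ D ∧ ((g a : Sym2 V)) ∈ D ∧
          ∀ d ∈ D, w (a : Sym2 V) ≤ w d) := by
  obtain ⟨g, hbij, hP⟩ := main_ind w hB (A \ B).card A hA rfl
  exact ⟨g, hbij, fun a => ⟨(hP a).1, (hP a).2.1, (hP a).2.2⟩⟩
end

section
/- Let G = (V,E) be a finite connected weighted undirected simple graph, let A and B be two minimum spanning trees of G, and let a ∈ A \ B. Then there exists an edge b ∈ B \ A with w(b) = w(a) such that (A \ {a}) ∪ {b} is also a minimum spanning tree of G. -/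
set_option linter.unusedSectionVars false
open SimpleGraph

section Aux

variable {V : Type*} [DecidableEq V]

/-- An edge of a walk in `fromEdgeSet ↑T` belongs to `T`. -/
lemma edge_mem_of_walk {T : Finset (Sym2 V)} {z t : V}
    (p : (fromEdgeSet (T : Set (Sym2 V))).Walk z t) {e : Sym2 V} (he : e ∈ p.edges) :
    e ∈ T ∧ ¬ e.IsDiag := by
  have h := p.edges_subset_edgeSet he
  rw [edgeSet_fromEdgeSet] at h
  exact ⟨by exact_mod_cast h.1, h.2⟩

/-- Removing an edge from an acyclic graph disconnects its two endpoints. -/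
lemma not_reach_erase {T : Finset (Sym2 V)}
    (hac : (fromEdgeSet (T : Set (Sym2 V))).IsAcyclic)
    {x y : V} (hxy : x ≠ y) (he : s(x, y) ∈ T) :
    ¬ (fromEdgeSet ((T.erase s(x, y) : Finset (Sym2 V)) : Set (Sym2 V))).Reachable x y := by
  intro h
  obtain ⟨q⟩ := h
  have hq_edges : ∀ e ∈ q.edges, e ∈ (fromEdgeSet (T : Set (Sym2 V))).edgeSet := by
    intro e hme
    obtain ⟨h1, h2⟩ := edge_mem_of_walk q hme
    rw [edgeSet_fromEdgeSet]
    exact ⟨by exact_mod_cast (Finset.mem_of_mem_erase h1), h2⟩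
  let q' : (fromEdgeSet (T : Set (Sym2 V))).Path x y := (q.transfer _ hq_edges).toPath
  have hq'e : s(x, y) ∉ (q' : (fromEdgeSet (T : Set (Sym2 V))).Walk x y).edges := by
    intro hmem
    have h2 := Walk.edges_toPath_subset _ hmem
    rw [Walk.edges_transfer] at h2
    obtain ⟨h1, _⟩ := edge_mem_of_walk q h2
    exact (Finset.notMem_erase _ _) h1
  have hadj : (fromEdgeSet (T : Set (Sym2 V))).Adj x y := (fromEdgeSet_adj _).2 ⟨he, hxy⟩
  have hp1 : (Walk.cons hadj Walk.nil).IsPath := by simp [hxy]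
  have huniq := hac.path_unique ⟨Walk.cons hadj Walk.nil, hp1⟩ q'
  apply hq'e
  rw [← huniq]
  simp

/-- After removing an edge `s(x,y)` from a connected graph, every vertex is reachable
from `x` or from `y`. -/
lemma reach_erase_dichotomy {T : Finset (Sym2 V)}
    (hconn : (fromEdgeSet (T : Set (Sym2 V))).Connected)
    {x y : V} (hxy : x ≠ y) (z : V) :
    (fromEdgeSet ((T.erase s(x, y) : Finset (Sym2 V)) : Set (Sym2 V))).Reachable x z ∨
    (fromEdgeSet ((T.erase s(x, y) : Finset (Sym2 V)) : Set (Sym2 V))).Reachable y z := by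
  obtain ⟨p0⟩ := hconn.preconnected z x
  let p : (fromEdgeSet (T : Set (Sym2 V))).Path z x := p0.toPath
  have hp : (p : (fromEdgeSet (T : Set (Sym2 V))).Walk z x).IsPath := p.2
  by_cases hce : s(x, y) ∈ (p : (fromEdgeSet (T : Set (Sym2 V))).Walk z x).edges
  · -- the path from z to x passes through the edge; cut it at y
    have hy : y ∈ (p : (fromEdgeSet (T : Set (Sym2 V))).Walk z x).support :=
      Walk.snd_mem_support_of_mem_edges _ hce
    set q := (p : (fromEdgeSet (T : Set (Sym2 V))).Walk z x).takeUntil y hy with hqdef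
    have hqe : s(x, y) ∉ q.edges := by
      intro hq
      have hxq : x ∈ q.support := Walk.fst_mem_support_of_mem_edges _ hq
      set r := (p : (fromEdgeSet (T : Set (Sym2 V))).Walk z x).dropUntil y hy with hrdef
      have hspec := Walk.take_spec (p : (fromEdgeSet (T : Set (Sym2 V))).Walk z x) hy
      have hsup : (p : (fromEdgeSet (T : Set (Sym2 V))).Walk z x).support
          = q.support ++ r.support.tail := by
        rw [← hspec, Walk.support_append]
      have hnodup := hp.support_nodup
      rw [hsup] at hnodup
      have hdisj := (List.nodup_append'.mp hnodup).2.2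
      have hxr : x ∈ r.support.tail := by
        have h1 : x ∈ r.support := r.end_mem_support
        rw [r.support_eq_cons] at h1
        rcases List.mem_cons.mp h1 with h | h
        · exact absurd h hxy
        · exact h
      exact hdisj hxq hxr
    refine Or.inr (Reachable.symm ⟨q.transfer _ ?_⟩)
    intro e hme
    have h2 := Walk.edges_takeUntil_subset _ hy hme
    obtain ⟨h1, hd⟩ := edge_mem_of_walk _ h2
    rw [edgeSet_fromEdgeSet]
    refine ⟨?_, hd⟩
    have : e ≠ s(x, y) := fun h => hqe (h ▸ hme)
    exact_mod_cast Finset.mem_erase.mpr ⟨this, h1⟩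
  · refine Or.inl (Reachable.symm ⟨(p : (fromEdgeSet (T : Set (Sym2 V))).Walk z x).transfer _ ?_⟩)
    intro e hme
    obtain ⟨h1, hd⟩ := edge_mem_of_walk _ hme
    rw [edgeSet_fromEdgeSet]
    refine ⟨?_, hd⟩
    have : e ≠ s(x, y) := fun h => hce (h ▸ hme)
    exact_mod_cast Finset.mem_erase.mpr ⟨this, h1⟩

lemma exists_mem_of_reachable {s : Set (Sym2 V)} {z t : V} (hzt : z ≠ t)
    (h : (fromEdgeSet s).Reachable z t) : ∃ e ∈ s, z ∈ e := by
  obtain ⟨p⟩ := h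
  cases p with
  | nil => exact absurd rfl hzt
  | cons h p => exact ⟨_, ((fromEdgeSet_adj _).1 h).1, Sym2.mem_mk_left _ _⟩

variable {G : SimpleGraph V}

/-- Exchange lemma for spanning trees: if `s(x,y) ∈ T` and `s(u,v)` is an edge of `G`
crossing the cut created by removing `s(x,y)` from `T`, then the swap is a spanning tree. -/
lemma swap_spanning {T : Finset (Sym2 V)} (hT : IsSpanningTree G T)
    {x y u v : V} (hxy : x ≠ y) (he : s(x, y) ∈ T)
    (hf : s(u, v) ∈ G.edgeSet)
    (hu : (fromEdgeSet ((T.erase s(x, y) : Finset (Sym2 V)) : Set (Sym2 V))).Reachable x u)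
    (hv : (fromEdgeSet ((T.erase s(x, y) : Finset (Sym2 V)) : Set (Sym2 V))).Reachable y v) :
    IsSpanningTree G (insert s(u, v) (T.erase s(x, y))) := by
  obtain ⟨hsub, hcov, hac, hconn⟩ := hT
  have huv : u ≠ v := (G.mem_edgeSet.mp hf).ne
  have hsep := not_reach_erase hac hxy he
  have hfnot : s(u, v) ∉ T.erase s(x, y) := by
    intro hmem
    have h1 : (fromEdgeSet ((T.erase s(x, y) : Finset (Sym2 V)) : Set (Sym2 V))).Adj u v :=
      (fromEdgeSet_adj _).2 ⟨by exact_mod_cast hmem, huv⟩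
    exact hsep ((hu.trans h1.reachable).trans hv.symm)
  have hle : fromEdgeSet ((T.erase s(x, y) : Finset (Sym2 V)) : Set (Sym2 V)) ≤
      fromEdgeSet ((insert s(u, v) (T.erase s(x, y)) : Finset (Sym2 V)) : Set (Sym2 V)) :=
    fromEdgeSet_mono (by exact_mod_cast Finset.subset_insert _ _)
  set K := fromEdgeSet ((insert s(u, v) (T.erase s(x, y)) : Finset (Sym2 V)) : Set (Sym2 V))
    with hK
  have hKuv : K.Adj u v :=
    (fromEdgeSet_adj _).2 ⟨by exact_mod_cast Finset.mem_insert_self _ _, huv⟩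
  have hxyK : K.Reachable x y := ((hu.mono hle).trans hKuv.reachable).trans (hv.mono hle).symm
  have hreach : ∀ z, K.Reachable x z := by
    intro z
    rcases reach_erase_dichotomy hconn hxy z with h | h
    · exact h.mono hle
    · exact hxyK.trans (h.mono hle)
  have hKconn : K.Connected := by
    haveI : Nonempty V := hconn.nonempty
    exact Connected.mk fun z z' => (hreach z).symm.trans (hreach z')
  have hKac : K.IsAcyclic := by
    intro ww c hc
    by_cases hfc : s(u, v) ∈ c.edges
    · have hcyc := (adj_and_reachable_delete_edges_iff_exists_cycle (G := K)).2 ⟨ww, c, hc, hfc⟩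
      have hle2 : K \ fromEdgeSet {s(u, v)} ≤
          fromEdgeSet ((T.erase s(x, y) : Finset (Sym2 V)) : Set (Sym2 V)) := by
        intro a b hab
        rw [sdiff_adj] at hab
        obtain ⟨hab1, hab2⟩ := hab
        rw [hK, fromEdgeSet_adj] at hab1
        rw [fromEdgeSet_adj]
        refine ⟨?_, hab1.2⟩
        have h1 : s(a, b) ∈ insert s(u, v) (T.erase s(x, y)) := by exact_mod_cast hab1.1
        rcases Finset.mem_insert.mp h1 with h2 | h2
        · exact absurd ((fromEdgeSet_adj _).2 ⟨h2 ▸ Set.mem_singleton _, hab1.2⟩) hab2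
        · exact_mod_cast h2
      exact hsep ((hu.trans (hcyc.2.mono hle2)).trans hv.symm)
    · have hce : ∀ e ∈ c.edges, e ∈ (fromEdgeSet (T : Set (Sym2 V))).edgeSet := by
        intro e hme
        have h := c.edges_subset_edgeSet hme
        rw [hK, edgeSet_fromEdgeSet] at h
        rw [edgeSet_fromEdgeSet]
        refine ⟨?_, h.2⟩
        have h1 : e ∈ insert s(u, v) (T.erase s(x, y)) := by exact_mod_cast h.1
        rcases Finset.mem_insert.mp h1 with h2 | h2
        · exact absurd (h2 ▸ hme) hfc
        · exact_mod_cast Finset.mem_of_mem_erase h2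
      exact hac (c.transfer _ hce) (hc.transfer hce)
  refine ⟨?_, ?_, hKac, hKconn⟩
  · intro e hme
    rcases Finset.mem_insert.mp (by exact_mod_cast hme) with h | h
    · exact h ▸ hf
    · exact hsub (by exact_mod_cast Finset.mem_of_mem_erase h)
  · intro z
    by_cases hz : z = x
    · subst hz
      obtain ⟨e, he1, he2⟩ := exists_mem_of_reachable hxy hxyK
      exact ⟨e, by exact_mod_cast he1, he2⟩
    · obtain ⟨e, he1, he2⟩ := exists_mem_of_reachable hz (hreach z).symm
      exact ⟨e, by exact_mod_cast he1, he2⟩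

end Aux

/-- If `A` and `B` are MSTs of a finite connected weighted graph and `a ∈ A \ B`, then
there is an edge `b ∈ B \ A` of the same weight as `a` such that `(A \ {a}) ∪ {b}` is
again an MST. -/
theorem mst_exchange_step {V : Type*} [Fintype V] [DecidableEq V]
    (G : SimpleGraph V) (hG : G.Connected) (w : Sym2 V → ℝ)
    (hpos : ∀ e ∈ G.edgeSet, 0 < w e)
    (A B : Finset (Sym2 V)) (hA : IsMST G w A) (hB : IsMST G w B)
    (a : Sym2 V) (ha : a ∈ A \ B) :
    ∃ b ∈ B \ A, w b = w a ∧ IsMST G w (insert b (A.erase a)) := by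
  induction a using Sym2.ind with
  | _ x y =>
    obtain ⟨haA, haB⟩ := Finset.mem_sdiff.mp ha
    obtain ⟨hAsub, hAcov, hAac, hAconn⟩ := hA.1
    obtain ⟨hBsub, hBcov, hBac, hBconn⟩ := hB.1
    have hxy : x ≠ y := (G.mem_edgeSet.mp (hAsub (by exact_mod_cast haA))).ne
    have hsep := not_reach_erase hAac hxy haA
    obtain ⟨p0⟩ := hBconn.preconnected x y
    set p : (fromEdgeSet (B : Set (Sym2 V))).Path x y := p0.toPath with hpdef
    obtain ⟨d, hd, hdu, hdv⟩ := Walk.exists_boundary_dart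
      (p : (fromEdgeSet (B : Set (Sym2 V))).Walk x y)
      {z | (fromEdgeSet ((A.erase s(x, y) : Finset (Sym2 V)) : Set (Sym2 V))).Reachable x z}
      (Reachable.refl x) hsep
    have hduv : (fromEdgeSet (B : Set (Sym2 V))).Adj d.fst d.snd := d.adj
    have huv : d.fst ≠ d.snd := hduv.ne
    have hbB : s(d.fst, d.snd) ∈ B := by
      have := ((fromEdgeSet_adj _).1 hduv).1
      exact_mod_cast this
    have hbedge : s(d.fst, d.snd) ∈ (p : (fromEdgeSet (B : Set (Sym2 V))).Walk x y).edges := by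
      have : d.edge ∈ (p : (fromEdgeSet (B : Set (Sym2 V))).Walk x y).edges :=
        List.mem_map_of_mem (f := Dart.edge) hd
      exact this
    have hbA : s(d.fst, d.snd) ∉ A := by
      intro hmem
      have hne : s(d.fst, d.snd) ≠ s(x, y) := by
        intro h
        exact haB (h ▸ hbB)
      have hmem2 : s(d.fst, d.snd) ∈ A.erase s(x, y) := Finset.mem_erase.mpr ⟨hne, hmem⟩
      have hadj : (fromEdgeSet ((A.erase s(x, y) : Finset (Sym2 V)) : Set (Sym2 V))).Adj
          d.fst d.snd := (fromEdgeSet_adj _).2 ⟨by exact_mod_cast hmem2, huv⟩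
      exact hdv (hdu.trans hadj.reachable)
    have hyv : (fromEdgeSet ((A.erase s(x, y) : Finset (Sym2 V)) : Set (Sym2 V))).Reachable
        y d.snd := by
      rcases reach_erase_dichotomy hAconn hxy d.snd with h | h
      · exact absurd h hdv
      · exact h
    have hA' : IsSpanningTree G (insert s(d.fst, d.snd) (A.erase s(x, y))) :=
      swap_spanning hA.1 hxy haA (hBsub (by exact_mod_cast hbB)) hdu hyv
    have hnotsame : ¬ (fromEdgeSet ((B.erase s(d.fst, d.snd) : Finset (Sym2 V)) :
        Set (Sym2 V))).Reachable x y := by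
      intro hr
      obtain ⟨q⟩ := hr
      have hq_edges : ∀ e ∈ q.edges, e ∈ (fromEdgeSet (B : Set (Sym2 V))).edgeSet := by
        intro e hme
        obtain ⟨h1, h2⟩ := edge_mem_of_walk q hme
        rw [edgeSet_fromEdgeSet]
        exact ⟨by exact_mod_cast (Finset.mem_of_mem_erase h1), h2⟩
      have huniq := hBac.path_unique p (q.transfer _ hq_edges).toPath
      have hmem : s(d.fst, d.snd) ∈
          ((q.transfer _ hq_edges).toPath : (fromEdgeSet (B : Set (Sym2 V))).Walk x y).edges :=
        huniq ▸ hbedge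
      have h2 := Walk.edges_toPath_subset _ hmem
      rw [Walk.edges_transfer] at h2
      obtain ⟨h1, _⟩ := edge_mem_of_walk q h2
      exact (Finset.notMem_erase _ _) h1
    have hB' : IsSpanningTree G (insert s(x, y) (B.erase s(d.fst, d.snd))) := by
      rcases reach_erase_dichotomy hBconn huv x with hx1 | hx1 <;>
        rcases reach_erase_dichotomy hBconn huv y with hy1 | hy1
      · exact absurd (hx1.symm.trans hy1) hnotsame
      · exact swap_spanning hB.1 huv hbB (hAsub (by exact_mod_cast haA)) hx1 hy1
      · have hswap : s(d.fst, d.snd) = s(d.snd, d.fst) := Sym2.eq_swap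
        rw [hswap] at hbB hx1 hy1 ⊢
        exact swap_spanning hB.1 huv.symm hbB (hAsub (by exact_mod_cast haA)) hx1 hy1
      · exact absurd (hx1.symm.trans hy1) hnotsame
    have hfnotA : s(d.fst, d.snd) ∉ A.erase s(x, y) := fun h => hbA (Finset.mem_of_mem_erase h)
    have hfnotB : s(x, y) ∉ B.erase s(d.fst, d.snd) := fun h => haB (Finset.mem_of_mem_erase h)
    have hsumA' : ∑ e ∈ insert s(d.fst, d.snd) (A.erase s(x, y)), w e
        = w s(d.fst, d.snd) + (∑ e ∈ A, w e - w s(x, y)) := by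
      rw [Finset.sum_insert hfnotA, Finset.sum_erase_eq_sub haA]
    have hsumB' : ∑ e ∈ insert s(x, y) (B.erase s(d.fst, d.snd)), w e
        = w s(x, y) + (∑ e ∈ B, w e - w s(d.fst, d.snd)) := by
      rw [Finset.sum_insert hfnotB, Finset.sum_erase_eq_sub hbB]
    have h1 := hA.2 _ hA'
    have h2 := hB.2 _ hB'
    rw [hsumA'] at h1
    rw [hsumB'] at h2
    have hwb : w s(d.fst, d.snd) = w s(x, y) := by linarith
    refine ⟨s(d.fst, d.snd), Finset.mem_sdiff.mpr ⟨hbB, hbA⟩, hwb, hA', ?_⟩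
    intro T' hT'
    have h3 := hA.2 T' hT'
    rw [hsumA', hwb]
    linarith
end
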